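/- arXiv:1501.07588 — 3 statements merged into one kernel-verified Lean document; each statement's English description precedes it below -/
import Mathlib

section
/- Let w ∈ ^{δ(J)}W. Then the sequence (J_n) is decreasing, i.e. J_0 ⊇ J_1 ⊇ J_2 ⊇ ⋯, and there exists N ≥ 0 such that J_n = J_N and w_n = w_N for all n ≥ N. -/
open List

namespace BedardAux

variable {B W : Type*} [Group W] {M : CoxeterMatrix B} (cs : CoxeterSystem M W)

local prefix:100 "σ" => cs.simple
local prefix:100 "π" => cs.wordProd
local prefix:100 "ℓ" => cs.length
local prefix:100 "ris" => cs.rightInvSeq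
local prefix:100 "lis" => cs.leftInvSeq

attribute [local instance] Classical.propDecidable

lemma one_add_one_zmod2 : (1 + 1 : ZMod 2) = 0 := by decide

lemma simple_conj_eq_simple_iff (i : B) (t : W) :
    (σ i * t * σ i = σ i) ↔ t = σ i := by
  constructor
  · intro h
    have h' : (σ i * t) * σ i = 1 * σ i := by rw [one_mul]; exact h
    have h1 : σ i * t = 1 := mul_right_cancel h'
    calc t = σ i * (σ i * t) := by rw [cs.simple_mul_simple_cancel_left]
    _ = σ i := by rw [h1, mul_one]
  · rintro rfl
    exact cs.simple_mul_simple_cancel_right (w := σ i) i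

/-- The parity permutation attached to a simple generator. -/
noncomputable def eta (i : B) : Equiv.Perm (W × ZMod 2) :=
  Function.Involutive.toPerm
    (fun p => (σ i * p.1 * σ i, p.2 + if p.1 = σ i then 1 else 0))
    (by
      rintro ⟨t, ε⟩
      have hfix : σ i * (σ i * t * σ i) * σ i = t := by
        rw [mul_assoc (σ i) t (σ i), cs.simple_mul_simple_cancel_left,
          cs.simple_mul_simple_cancel_right]
      show (σ i * (σ i * t * σ i) * σ i,
          ε + (if t = σ i then 1 else 0) + if σ i * t * σ i = σ i then 1 else 0) = (t, ε)
      rw [hfix, simple_conj_eq_simple_iff]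
      by_cases h : t = σ i
      · simp [h, add_assoc, one_add_one_zmod2]
      · simp [h])

lemma eta_apply (i : B) (t : W) (ε : ZMod 2) :
    eta cs i (t, ε) = (σ i * t * σ i, ε + if t = σ i then 1 else 0) := rfl

/-- Product of parity permutations over a word. -/
noncomputable def Fp (ω : List B) : Equiv.Perm (W × ZMod 2) :=
  (ω.map (eta cs)).prod

@[simp] lemma Fp_nil : Fp cs ([] : List B) = 1 := rfl

lemma Fp_cons (i : B) (ω : List B) : Fp cs (i :: ω) = eta cs i * Fp cs ω := by
  simp [Fp]

lemma Fp_append (ω ω' : List B) : Fp cs (ω ++ ω') = Fp cs ω * Fp cs ω' := by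
  simp [Fp]

lemma Fp_apply (ω : List B) (t : W) (ε : ZMod 2) :
    Fp cs ω (t, ε) = (π ω * t * (π ω)⁻¹, ε + ((ris ω).count t : ZMod 2)) := by
  induction ω generalizing ε with
  | nil => simp
  | cons i ω ih =>
    rw [Fp_cons, Equiv.Perm.mul_apply, ih, eta_apply]
    have hris : ris (i :: ω) = ((π ω)⁻¹ * σ i * π ω) :: ris ω := rfl
    rw [hris, count_cons]
    have hc : (π ω * t * (π ω)⁻¹ = σ i) ↔ (((π ω)⁻¹ * σ i * π ω) == t) = true := by
      simp only [beq_iff_eq]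
      constructor
      · intro h; rw [← h]; group
      · intro h; rw [← h]; group
    refine Prod.ext ?_ ?_
    · show σ i * (π ω * t * (π ω)⁻¹) * σ i = π (i :: ω) * t * (π (i :: ω))⁻¹
      rw [cs.wordProd_cons, mul_inv_rev, cs.inv_simple]
      group
    · show ε + ((ris ω).count t : ZMod 2) + (if π ω * t * (π ω)⁻¹ = σ i then 1 else 0)
        = ε + (((ris ω).count t + if (((π ω)⁻¹ * σ i * π ω) == t) = true then 1 else 0 : ℕ) : ZMod 2)
      rw [if_congr hc rfl rfl]
      push_cast
      by_cases h : (((π ω)⁻¹ * σ i * π ω) == t) = true <;> simp [h] <;> ring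

lemma mul_pow_swap (a b : W) (r : ℕ) : a * (b * a) ^ r = (a * b) ^ r * a := by
  induction r with
  | zero => simp
  | succ r ih =>
    rw [pow_succ, ← mul_assoc, ih, pow_succ]
    group

lemma aW_add_two (i i' : B) (m : ℕ) :
    CoxeterSystem.alternatingWord i i' (m + 2) =
      CoxeterSystem.alternatingWord i i' m ++ [i, i'] := by
  rw [CoxeterSystem.alternatingWord_succ, CoxeterSystem.alternatingWord_succ]
  simp [List.concat_eq_append, List.append_assoc]

lemma getD_ris_alternatingWord (n : ℕ) :
    ∀ (i i' : B) (j : ℕ), j < n →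
      (ris (CoxeterSystem.alternatingWord i i' n)).getD j 1
        = (σ i' * σ i) ^ (n - 1 - j) * σ i' := by
  induction n with
  | zero => omega
  | succ n ih =>
    intro i i' j hj
    rw [CoxeterSystem.alternatingWord_succ, cs.rightInvSeq_concat]
    have hlen : (List.map (⇑(MulAut.conj (σ i'))) (ris (CoxeterSystem.alternatingWord i' i n))).length = n := by
      simp [CoxeterSystem.length_alternatingWord]
    rcases lt_or_ge j n with hjn | hjn
    · rw [List.concat_eq_append, List.getD_append _ _ _ _ (by omega)]
      rw [(by simp : (1 : W) = (MulAut.conj (σ i')) 1), List.getD_map, ih i' i j hjn]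
      have harith : n + 1 - 1 - j = (n - 1 - j) + 1 := by omega
      rw [harith]
      have h := mul_pow_swap (σ i') (σ i) (n - 1 - j)
      show σ i' * ((σ i * σ i') ^ (n - 1 - j) * σ i) * (σ i')⁻¹ = _
      rw [cs.inv_simple, ← mul_assoc, h, pow_succ]
      group
    · have hjn' : j = n := by omega
      subst hjn'
      rw [List.concat_eq_append, List.getD_append_right _ _ _ _ (by omega)]
      simp [hlen]

lemma ris_aW_double (i i' : B) (m : ℕ) (h : (σ i' * σ i) ^ m = 1) :
    ris (CoxeterSystem.alternatingWord i i' (2 * m)) =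
      ris (CoxeterSystem.alternatingWord i i' m) ++ ris (CoxeterSystem.alternatingWord i i' m) := by
  apply List.ext_getElem
  · simp [CoxeterSystem.length_alternatingWord]; omega
  · intro j h1 h2
    have hj : j < 2 * m := by simpa [CoxeterSystem.length_alternatingWord] using h1
    rw [← List.getD_eq_getElem _ 1, ← List.getD_eq_getElem _ 1]
    rw [getD_ris_alternatingWord cs (2 * m) i i' j hj]
    rcases lt_or_ge j m with hjm | hjm
    · rw [List.getD_append _ _ _ _ (by simp [CoxeterSystem.length_alternatingWord]; omega)]
      rw [getD_ris_alternatingWord cs m i i' j hjm]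
      have he : 2 * m - 1 - j = (m - 1 - j) + m := by omega
      rw [he, pow_add, h, mul_one]
    · rw [List.getD_append_right _ _ _ _ (by simp [CoxeterSystem.length_alternatingWord]; omega)]
      have hlen : (ris (CoxeterSystem.alternatingWord i i' m)).length = m := by
        simp [CoxeterSystem.length_alternatingWord]
      rw [hlen, getD_ris_alternatingWord cs m i i' (j - m) (by omega)]
      congr 2
      omega

lemma Fp_pow (i i' : B) (m : ℕ) :
    (eta cs i * eta cs i') ^ m = Fp cs (CoxeterSystem.alternatingWord i i' (2 * m)) := by
  induction m with
  | zero =>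
    simp [Fp, show CoxeterSystem.alternatingWord i i' 0 = ([] : List B) from rfl]
  | succ m ih =>
    have h2 : 2 * (m + 1) = 2 * m + 2 := by omega
    rw [h2, aW_add_two, Fp_append, pow_succ, ih,
      show Fp cs [i, i'] = eta cs i * eta cs i' from by simp [Fp]]

lemma eta_liftable : M.IsLiftable (fun i => eta cs i) := by
  intro i i'
  show (eta cs i * eta cs i') ^ M.M i i' = 1
  rw [Fp_pow]
  apply Equiv.ext
  rintro ⟨t, ε⟩
  rw [Fp_apply]
  have hπ : π (CoxeterSystem.alternatingWord i i' (2 * M.M i i')) = 1 := by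
    rw [cs.prod_alternatingWord_eq_mul_pow]
    rw [if_pos (by exact even_two_mul _), show 2 * M.M i i' / 2 = M.M i i' from by omega,
      cs.simple_mul_simple_pow, one_mul]
  have hcount : ((ris (CoxeterSystem.alternatingWord i i' (2 * M.M i i'))).count t : ZMod 2) = 0 := by
    rw [ris_aW_double cs i i' (M.M i i') (cs.simple_mul_simple_pow' i i'), List.count_append]
    push_cast
    exact CharTwo.add_self_eq_zero _
  rw [hπ, hcount, add_zero]
  simp

/-- The parity representation `W →* Perm (W × ZMod 2)`. -/
noncomputable def phi : W →* Equiv.Perm (W × ZMod 2) :=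
  cs.lift ⟨fun i => eta cs i, eta_liftable cs⟩

lemma phi_simple (i : B) : phi cs (σ i) = eta cs i :=
  cs.lift_apply_simple (eta_liftable cs) i

lemma phi_wordProd (ω : List B) : phi cs (π ω) = Fp cs ω := by
  rw [CoxeterSystem.wordProd, map_list_prod, List.map_map, Fp]
  congr 1
  apply List.map_congr_left
  intro i _
  exact phi_simple cs i

/-- The parity cocycle. -/
noncomputable def nn (w t : W) : ZMod 2 := (phi cs w (t, 0)).2

lemma nn_wordProd (ω : List B) (t : W) :
    nn cs (π ω) t = ((ris ω).count t : ZMod 2) := by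
  rw [nn, phi_wordProd, Fp_apply, zero_add]

lemma phi_apply (w t : W) (ε : ZMod 2) :
    phi cs w (t, ε) = (w * t * w⁻¹, ε + nn cs w t) := by
  obtain ⟨ω, rfl⟩ := cs.wordProd_surjective w
  rw [phi_wordProd, Fp_apply, nn_wordProd]

lemma nn_mul (w v t : W) : nn cs (w * v) t = nn cs v t + nn cs w (v * t * v⁻¹) := by
  have h : phi cs (w * v) (t, 0) = phi cs w (phi cs v (t, 0)) := by
    rw [map_mul]
    rfl
  rw [phi_apply, phi_apply, phi_apply] at h
  have := congrArg Prod.snd h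
  simpa [nn, add_comm] using this

lemma nn_simple (i : B) (t : W) : nn cs (σ i) t = if t = σ i then 1 else 0 := by
  have h : σ i = π [i] := by simp
  rw [h, nn_wordProd, cs.rightInvSeq_singleton, List.count_singleton']
  by_cases hc : t = σ i
  · simp [hc]
  · simp [hc, Ne.symm hc]

lemma nn_conj_simple_self (j : B) (u : W) (hu : nn cs u u = 1) :
    nn cs (σ j * u * σ j) (σ j * u * σ j) = 1 := by
  set v := σ j * u * σ j with hv
  have h1 : v = σ j * (u * σ j) := by rw [hv]; group
  have h2 : nn cs v v = nn cs (u * σ j) v + nn cs (σ j) ((u * σ j) * v * (u * σ j)⁻¹) := by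
    nth_rw 1 [h1]
    exact nn_mul cs (σ j) (u * σ j) v
  have hA : (u * σ j) * v * (u * σ j)⁻¹ = u := by
    rw [hv, mul_inv_rev, cs.inv_simple]
    have e : u * σ j * (σ j * u * σ j) * (σ j * u⁻¹) = u * (σ j * σ j) * u * (σ j * σ j) * u⁻¹ := by
      group
    rw [e, cs.simple_mul_simple_self, mul_one, mul_one, mul_assoc, mul_inv_cancel, mul_one]
  have h3 : nn cs (u * σ j) v = nn cs (σ j) v + nn cs u (σ j * v * (σ j)⁻¹) :=
    nn_mul cs u (σ j) v
  have hC : σ j * v * (σ j)⁻¹ = u := by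
    rw [hv, cs.inv_simple]
    have e : σ j * (σ j * u * σ j) * σ j = (σ j * σ j) * u * (σ j * σ j) := by group
    rw [e, cs.simple_mul_simple_self, one_mul, mul_one]
  rw [h2, hA, h3, hC, hu, nn_simple, nn_simple]
  have hiff : v = σ j ↔ u = σ j := by rw [hv]; exact simple_conj_eq_simple_iff cs j u
  by_cases hcase : u = σ j
  · rw [if_pos (hiff.mpr hcase), if_pos hcase]
    decide
  · rw [if_neg (fun hh => hcase (hiff.mp hh)), if_neg hcase, zero_add, add_zero]

lemma nn_reflection_self {t : W} (ht : cs.IsReflection t) : nn cs t t = 1 := by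
  obtain ⟨w, i, rfl⟩ := ht
  induction w using cs.simple_induction_left with
  | one => simpa using nn_simple cs i (σ i)
  | mul_simple_left w j ih =>
    have h : σ j * w * σ i * (σ j * w)⁻¹ = σ j * (w * σ i * w⁻¹) * σ j := by
      rw [mul_inv_rev, cs.inv_simple]
      group
    rw [h]
    exact nn_conj_simple_self cs j _ ih

theorem mem_rightInvSeq_of_isRightInversion {ω : List B} (hω : cs.IsReduced ω) {t : W}
    (ht : cs.IsRightInversion (π ω) t) : t ∈ ris ω := by
  have htr : cs.IsReflection t := ht.1
  have h1 : nn cs (π ω) t = 1 := by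
    have hw : π ω = (π ω * t) * t := by rw [mul_assoc, htr.mul_self, mul_one]
    rw [hw, nn_mul]
    have e : t * t * t⁻¹ = t := by rw [htr.inv, htr.mul_self, one_mul]
    rw [e, nn_reflection_self cs htr]
    obtain ⟨α, hαred, hα⟩ := cs.exists_reduced_word' (π ω * t)
    have hnot : t ∉ ris α := by
      intro hmem
      have h5 := (cs.isRightInversion_of_mem_rightInvSeq hαred hmem).2
      rw [← hα] at h5
      have h6 : π ω * t * t = π ω := by rw [mul_assoc, htr.mul_self, mul_one]
      rw [h6] at h5
      have h7 := ht.2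
      omega
    have hz : nn cs (π ω * t) t = 0 := by
      rw [hα, nn_wordProd, List.count_eq_zero_of_not_mem hnot]
      simp
    rw [hz, add_zero]
  have h2 : ((ris ω).count t : ZMod 2) = 1 := by rw [← nn_wordProd]; exact h1
  have h3 : (ris ω).count t ≠ 0 := by
    intro h0
    rw [h0] at h2
    simp at h2
  exact List.count_pos_iff.mp (Nat.pos_of_ne_zero h3)

theorem strongExchange_right {ω : List B} (hω : cs.IsReduced ω) {t : W}
    (ht : cs.IsRightInversion (π ω) t) : ∃ j < ω.length, π (ω.eraseIdx j) = π ω * t := by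
  obtain ⟨j, hj, hget⟩ := List.getElem_of_mem (mem_rightInvSeq_of_isRightInversion cs hω ht)
  refine ⟨j, by simpa using hj, ?_⟩
  rw [← cs.wordProd_mul_getD_rightInvSeq ω j, List.getD_eq_getElem _ 1 hj, hget]

theorem strongExchange_left {ω : List B} (hω : cs.IsReduced ω) {t : W}
    (ht : cs.IsLeftInversion (π ω) t) : ∃ j < ω.length, π (ω.eraseIdx j) = t * π ω := by
  have hrev : cs.IsRightInversion (π ω.reverse) t := by
    rw [cs.wordProd_reverse]
    exact (cs.isRightInversion_inv_iff).mpr ht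
  have hred : cs.IsReduced ω.reverse := (cs.isReduced_reverse_iff ω).mpr hω
  have hmem : t ∈ ris ω.reverse := mem_rightInvSeq_of_isRightInversion cs hred hrev
  rw [cs.rightInvSeq_reverse, List.mem_reverse] at hmem
  obtain ⟨j, hj, hget⟩ := List.getElem_of_mem hmem
  refine ⟨j, by simpa using hj, ?_⟩
  rw [← cs.getD_leftInvSeq_mul_wordProd ω j, List.getD_eq_getElem _ 1 hj, hget]

/-! ### Parabolic subgroups -/

section Parabolic

variable (I : Set B)

lemma wordProd_mem_closure {ω : List B} (hω : ∀ i ∈ ω, i ∈ I) :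
    π ω ∈ Subgroup.closure (cs.simple '' I) := by
  induction ω with
  | nil =>
    rw [cs.wordProd_nil]
    exact one_mem _
  | cons i ω ih =>
    rw [cs.wordProd_cons]
    exact mul_mem (Subgroup.subset_closure ⟨i, hω i (List.mem_cons_self), rfl⟩)
      (ih fun j hj => hω j (List.mem_cons_of_mem _ hj))

lemma exists_word_alphabet {b : W} (hb : b ∈ Subgroup.closure (cs.simple '' I)) :
    ∃ ω : List B, (∀ i ∈ ω, i ∈ I) ∧ π ω = b := by
  induction hb using Subgroup.closure_induction with
  | mem x hx =>
    obtain ⟨i, hi, rfl⟩ := hx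
    exact ⟨[i], by simpa using hi, by simp⟩
  | one => exact ⟨[], by simp, by simp⟩
  | mul x y hx hy ihx ihy =>
    obtain ⟨α, hα, rfl⟩ := ihx
    obtain ⟨β, hβ, rfl⟩ := ihy
    refine ⟨α ++ β, ?_, by rw [cs.wordProd_append]⟩
    intro i hi
    rcases List.mem_append.mp hi with h | h
    exacts [hα i h, hβ i h]
  | inv x hx ihx =>
    obtain ⟨α, hα, rfl⟩ := ihx
    exact ⟨α.reverse, fun i hi => hα i (by simpa using hi), by rw [cs.wordProd_reverse]⟩

lemma exists_reduced_word_alphabet_aux (n : ℕ) :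
    ∀ ω : List B, ω.length = n → (∀ i ∈ ω, i ∈ I) →
      ∃ ω' : List B, (∀ i ∈ ω', i ∈ I) ∧ cs.IsReduced ω' ∧ π ω' = π ω := by
  induction n using Nat.strong_induction_on with
  | _ n ih =>
    intro ω hlen hω
    by_cases hred : cs.IsReduced ω
    · exact ⟨ω, hω, hred, rfl⟩
    · have hne : ω ≠ [] := by
        rintro rfl
        exact hred (by simp [CoxeterSystem.IsReduced])
      have hpos : 0 < ω.length := List.length_pos_iff.mpr hne
      have hP : ¬ cs.IsReduced (ω.take ((ω.length - 1) + 1)) := by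
        rw [show (ω.length - 1) + 1 = ω.length from by omega, List.take_length]
        exact hred
      obtain ⟨k, hk, hkmin⟩ :
          ∃ k, ¬ cs.IsReduced (ω.take (k + 1)) ∧ ∀ m < k, cs.IsReduced (ω.take (m + 1)) := by
        have hmem := Nat.sInf_mem (s := {m : ℕ | ¬ cs.IsReduced (ω.take (m + 1))})
          ⟨ω.length - 1, hP⟩
        exact ⟨sInf {m : ℕ | ¬ cs.IsReduced (ω.take (m + 1))}, hmem,
          fun m hm => not_not.mp (Nat.notMem_of_lt_sInf hm)⟩
      have hklt : k < ω.length := by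
        by_contra hge
        exact hP (hkmin (ω.length - 1) (by omega))
      have hred_k : cs.IsReduced (ω.take k) := by
        rcases Nat.eq_zero_or_pos k with h0 | h0
        · rw [h0]
          simp [CoxeterSystem.IsReduced]
        · have h1 := hkmin (k - 1) (by omega)
          rwa [show k - 1 + 1 = k from by omega] at h1
      have htake_len : (ω.take k).length = k := by
        rw [List.length_take]
        omega
      have htake1 : ω.take (k + 1) = ω.take k ++ [ω[k]] := by
        rw [List.take_succ, List.getElem?_eq_getElem hklt]
        rfl
      have hπtake1 : π (ω.take (k + 1)) = π (ω.take k) * σ (ω[k]) := by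
        rw [htake1, cs.wordProd_append, cs.wordProd_singleton]
      have hlen_take1 : (ω.take (k + 1)).length = k + 1 := by
        rw [List.length_take]
        omega
      have hlk : ℓ (π (ω.take k)) = k := by
        have h1 := hred_k
        rw [CoxeterSystem.IsReduced] at h1
        rw [h1, htake_len]
      have hdesc : ℓ (π (ω.take k) * σ (ω[k])) + 1 = ℓ (π (ω.take k)) := by
        rcases cs.length_mul_simple (π (ω.take k)) (ω[k]) with h | h
        · exfalso
          apply hk
          show ℓ (π (ω.take (k + 1))) = (ω.take (k + 1)).length
          rw [hπtake1, h, hlk, hlen_take1]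
        · exact h
      have hinv : cs.IsRightInversion (π (ω.take k)) (σ (ω[k])) := by
        refine ⟨cs.isReflection_simple _, ?_⟩
        omega
      obtain ⟨j, hj, hjeq⟩ := strongExchange_right cs hred_k hinv
      rw [htake_len] at hj
      set ω' := (ω.take k).eraseIdx j ++ ω.drop (k + 1) with hω'def
      have hπω' : π ω' = π ω := by
        rw [hω'def, cs.wordProd_append, hjeq, hπtake1.symm, ← cs.wordProd_append,
          List.take_append_drop]
      have hlenω' : ω'.length < n := by
        rw [hω'def, List.length_append, List.length_eraseIdx, List.length_drop, htake_len]
        rw [if_pos hj]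
        omega
      have halph : ∀ i ∈ ω', i ∈ I := by
        intro i hi
        rcases List.mem_append.mp hi with h | h
        · exact hω i ((List.take_sublist k ω).subset ((List.eraseIdx_sublist _ j).subset h))
        · exact hω i ((List.drop_sublist (k + 1) ω).subset h)
      obtain ⟨ω'', h1, h2, h3⟩ := ih ω'.length hlenω' ω' rfl halph
      exact ⟨ω'', h1, h2, by rw [h3, hπω']⟩

lemma exists_reduced_word_alphabet {b : W} (hb : b ∈ Subgroup.closure (cs.simple '' I)) :
    ∃ ω : List B, (∀ i ∈ ω, i ∈ I) ∧ cs.IsReduced ω ∧ π ω = b := by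
  obtain ⟨ω, hω, hπ⟩ := exists_word_alphabet cs I hb
  obtain ⟨ω', h1, h2, h3⟩ := exists_reduced_word_alphabet_aux cs I ω.length ω rfl hω
  exact ⟨ω', h1, h2, by rw [h3, hπ]⟩

theorem length_mul_of_min_right (u : W)
    (hmin : ∀ c ∈ Subgroup.closure (cs.simple '' I), ℓ u ≤ ℓ (u * c)) :
    ∀ b ∈ Subgroup.closure (cs.simple '' I), ℓ (u * b) = ℓ u + ℓ b := by
  have main : ∀ n (b : W), b ∈ Subgroup.closure (cs.simple '' I) → ℓ b = n →
      ℓ (u * b) = ℓ u + ℓ b := by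
    intro n
    induction n using Nat.strong_induction_on with
    | _ n ih =>
      intro b hb hn
      obtain ⟨β, hβI, hβred, rfl⟩ := exists_reduced_word_alphabet cs I hb
      rcases List.eq_nil_or_concat β with rfl | ⟨β', i, hconcat⟩
      · simp
      · rw [List.concat_eq_append] at hconcat
        subst hconcat
        have hi : i ∈ I := hβI i (by simp)
        have hβ'red : cs.IsReduced β' := by
          have := CoxeterSystem.IsReduced.take hβred β'.length
          rwa [List.take_left] at this
        have hβ'I : ∀ j ∈ β', j ∈ I := fun j hj => hβI j (by simp [hj])
        have hb'mem : π β' ∈ Subgroup.closure (cs.simple '' I) := wordProd_mem_closure cs I hβ'I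
        have hlb : ℓ (π (β' ++ [i])) = β'.length + 1 := by
          have h1 := hβred
          rw [CoxeterSystem.IsReduced] at h1
          rw [h1]
          simp
        have hlb' : ℓ (π β') = β'.length := hβ'red
        have hsplit : π (β' ++ [i]) = π β' * σ i := by
          rw [cs.wordProd_append, cs.wordProd_singleton]
        have ihb' : ℓ (u * π β') = ℓ u + ℓ (π β') := by
          apply ih β'.length (by omega) (π β') hb'mem hlb'
        have hlbs : ℓ (π β' * σ i) = β'.length + 1 := by
          rw [← hsplit]
          exact hlb
        rcases cs.length_mul_simple (u * π β') i with hcase | hcase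
        · rw [hsplit, ← mul_assoc, hcase, ihb', hlbs, hlb']
          omega
        · exfalso
          obtain ⟨μ, hμred, hμ⟩ := cs.exists_reduced_word' u
          have hμlen : μ.length = ℓ u := by rw [CoxeterSystem.IsReduced] at hμred; rw [← hμred, ← hμ]
          have hconcred : cs.IsReduced (μ ++ β') := by
            show ℓ (π (μ ++ β')) = (μ ++ β').length
            rw [cs.wordProd_append, ← hμ, List.length_append, hμlen, ← hlb', ihb']
          have hconcπ : π (μ ++ β') = u * π β' := by rw [cs.wordProd_append, ← hμ]
          have hinv : cs.IsRightInversion (π (μ ++ β')) (σ i) := by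
            refine ⟨cs.isReflection_simple _, ?_⟩
            rw [hconcπ]
            omega
          obtain ⟨j, hj, hjeq⟩ := strongExchange_right cs hconcred hinv
          rw [hconcπ] at hjeq
          rcases lt_or_ge j μ.length with hjμ | hjμ
          · rw [List.eraseIdx_append_of_lt_length hjμ] at hjeq
            rw [cs.wordProd_append] at hjeq
            have hc : (π β' * σ i * (π β')⁻¹) ∈ Subgroup.closure (cs.simple '' I) :=
              mul_mem (mul_mem hb'mem (Subgroup.subset_closure ⟨i, hi, rfl⟩)) (inv_mem hb'mem)
            have he : u * (π β' * σ i * (π β')⁻¹) = π (μ.eraseIdx j) := by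
              rw [show u * (π β' * σ i * (π β')⁻¹) = (u * π β' * σ i) * (π β')⁻¹ from by group,
                ← hjeq, mul_assoc, mul_inv_cancel, mul_one]
            have hle := cs.length_wordProd_le (μ.eraseIdx j)
            rw [List.length_eraseIdx, if_pos hjμ, hμlen] at hle
            have := hmin _ hc
            rw [he] at this
            omega
          · rw [List.eraseIdx_append_of_length_le hjμ] at hjeq
            rw [cs.wordProd_append] at hjeq
            have he : π β' * σ i = π (β'.eraseIdx (j - μ.length)) := by
              have h2 : u * (π β' * σ i) = u * π (β'.eraseIdx (j - μ.length)) := by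
                rw [← mul_assoc, ← hjeq, hμ]
              exact mul_left_cancel h2
            have hle := cs.length_wordProd_le (β'.eraseIdx (j - μ.length))
            have hjlt : j - μ.length < β'.length := by
              rw [List.length_append] at hj
              omega
            rw [List.length_eraseIdx, if_pos hjlt] at hle
            rw [← hsplit] at he
            rw [he] at hlb
            omega
  intro b hb
  exact main (ℓ b) b hb rfl

lemma exists_min_coset_rep (u : W) :
    ∃ u₀ b₀, b₀ ∈ Subgroup.closure (cs.simple '' I) ∧ u = u₀ * b₀ ∧
      ∀ c ∈ Subgroup.closure (cs.simple '' I), ℓ u₀ ≤ ℓ (u₀ * c) := by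
  classical
  set S : Set ℕ := {n | ∃ b ∈ Subgroup.closure (cs.simple '' I), ℓ (u * b) = n} with hS
  have hne : S.Nonempty := ⟨ℓ u, 1, one_mem _, by simp⟩
  obtain ⟨b₁, hb₁, hlen⟩ := Nat.sInf_mem hne
  refine ⟨u * b₁, b₁⁻¹, inv_mem hb₁, by group, ?_⟩
  intro c hc
  have hmem : ℓ (u * b₁ * c) ∈ S := ⟨b₁ * c, mul_mem hb₁ hc, by rw [← mul_assoc]⟩
  rw [hlen]
  exact Nat.sInf_le hmem

lemma min_of_no_right_descent (u : W) (h : ∀ i ∈ I, ¬ cs.IsRightDescent u i) :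
    ∀ c ∈ Subgroup.closure (cs.simple '' I), ℓ u ≤ ℓ (u * c) := by
  obtain ⟨u₀, b₀, hb₀, hdecomp, hmin⟩ := exists_min_coset_rep cs I u
  have hadd : ℓ u = ℓ u₀ + ℓ b₀ := by
    rw [hdecomp]
    exact length_mul_of_min_right cs I u₀ hmin b₀ hb₀
  by_cases hb1 : b₀ = 1
  · subst hb1
    rw [mul_one] at hdecomp
    subst hdecomp
    exact hmin
  · exfalso
    obtain ⟨β, hβI, hβred, hβ⟩ := exists_reduced_word_alphabet cs I hb₀
    have hβne : β ≠ [] := by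
      rintro rfl
      simp at hβ
      exact hb1 hβ.symm
    rcases List.eq_nil_or_concat β with rfl | ⟨β', i, hconcat⟩
    · exact hβne rfl
    · rw [List.concat_eq_append] at hconcat
      subst hconcat
      have hi : i ∈ I := hβI i (by simp)
      have hlb : ℓ b₀ = β'.length + 1 := by
        have h1 := hβred
        rw [CoxeterSystem.IsReduced] at h1
        rw [← hβ, h1]
        simp
      have hb₀s : b₀ * σ i = π β' := by
        rw [← hβ, cs.wordProd_append, cs.wordProd_singleton, mul_assoc,
          cs.simple_mul_simple_self, mul_one]
      have hdes : cs.IsRightDescent u i := by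
        show ℓ (u * σ i) < ℓ u
        have h1 : u * σ i = u₀ * π β' := by rw [hdecomp, mul_assoc, hb₀s]
        have h2 : ℓ (u₀ * π β') ≤ ℓ u₀ + β'.length := by
          have h3 := cs.length_mul_le u₀ (π β')
          have h4 := cs.length_wordProd_le β'
          omega
        rw [h1]
        omega
      exact h i hi hdes

lemma min_of_no_left_descent (u : W) (h : ∀ i ∈ I, ¬ cs.IsLeftDescent u i) :
    ∀ c ∈ Subgroup.closure (cs.simple '' I), ℓ u ≤ ℓ (c * u) := by
  have h' : ∀ i ∈ I, ¬ cs.IsRightDescent u⁻¹ i := by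
    intro i hi
    rw [cs.isRightDescent_inv_iff]
    exact h i hi
  have hmin := min_of_no_right_descent cs I u⁻¹ h'
  intro c hc
  calc ℓ u = ℓ u⁻¹ := (cs.length_inv u).symm
  _ ≤ ℓ (u⁻¹ * c⁻¹) := hmin c⁻¹ (inv_mem hc)
  _ = ℓ ((c * u)⁻¹) := by rw [mul_inv_rev]
  _ = ℓ (c * u) := cs.length_inv _

theorem length_mul_of_min_left (u : W)
    (hmin : ∀ c ∈ Subgroup.closure (cs.simple '' I), ℓ u ≤ ℓ (c * u)) :
    ∀ a ∈ Subgroup.closure (cs.simple '' I), ℓ (a * u) = ℓ a + ℓ u := by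
  have hmin' : ∀ c ∈ Subgroup.closure (cs.simple '' I), ℓ u⁻¹ ≤ ℓ (u⁻¹ * c) := by
    intro c hc
    calc ℓ u⁻¹ = ℓ u := cs.length_inv u
    _ ≤ ℓ (c⁻¹ * u) := hmin c⁻¹ (inv_mem hc)
    _ = ℓ ((c⁻¹ * u)⁻¹) := (cs.length_inv _).symm
    _ = ℓ (u⁻¹ * c) := by rw [mul_inv_rev, inv_inv]
  intro a ha
  have := length_mul_of_min_right cs I u⁻¹ hmin' a⁻¹ (inv_mem ha)
  calc ℓ (a * u) = ℓ ((a * u)⁻¹) := (cs.length_inv _).symm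
  _ = ℓ (u⁻¹ * a⁻¹) := by rw [mul_inv_rev]
  _ = ℓ u⁻¹ + ℓ a⁻¹ := this
  _ = ℓ a + ℓ u := by rw [cs.length_inv, cs.length_inv]; omega

end Parabolic

/-! ### Double cosets -/

theorem doubleCoset_min_unique (K I : Set B) (w u x : W)
    (hu : u ∈ {y : W | ∃ a ∈ Subgroup.closure (cs.simple '' K),
      ∃ b ∈ Subgroup.closure (cs.simple '' I), y = a * w * b})
    (hx : x ∈ {y : W | ∃ a ∈ Subgroup.closure (cs.simple '' K),
      ∃ b ∈ Subgroup.closure (cs.simple '' I), y = a * w * b})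
    (humin : ∀ y ∈ {y : W | ∃ a ∈ Subgroup.closure (cs.simple '' K),
      ∃ b ∈ Subgroup.closure (cs.simple '' I), y = a * w * b}, ℓ u ≤ ℓ y)
    (hxmin : ∀ y ∈ {y : W | ∃ a ∈ Subgroup.closure (cs.simple '' K),
      ∃ b ∈ Subgroup.closure (cs.simple '' I), y = a * w * b}, ℓ x ≤ ℓ y) :
    x = u := by
  obtain ⟨a₀, ha₀, b₀, hb₀, hu0⟩ := hu
  obtain ⟨a₁, ha₁, b₁, hb₁, hx1⟩ := hx
  have hDCmem : ∀ a b : W, a ∈ Subgroup.closure (cs.simple '' K) →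
      b ∈ Subgroup.closure (cs.simple '' I) →
      a * u * b ∈ {y : W | ∃ a ∈ Subgroup.closure (cs.simple '' K),
        ∃ b ∈ Subgroup.closure (cs.simple '' I), y = a * w * b} := by
    intro a b ha hb
    exact ⟨a * a₀, mul_mem ha ha₀, b₀ * b, mul_mem hb₀ hb, by rw [hu0]; group⟩
  have hlen : ℓ x = ℓ u := by
    have h1 := hxmin u ⟨a₀, ha₀, b₀, hb₀, hu0⟩
    have h2 := humin x ⟨a₁, ha₁, b₁, hb₁, hx1⟩
    omega
  have hunoL : ∀ i ∈ K, ¬ cs.IsLeftDescent u i := by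
    intro i hi hdes
    have hmem : σ i * u ∈ {y : W | ∃ a ∈ Subgroup.closure (cs.simple '' K),
        ∃ b ∈ Subgroup.closure (cs.simple '' I), y = a * w * b} := by
      have := hDCmem (σ i) 1 (Subgroup.subset_closure ⟨i, hi, rfl⟩) (one_mem _)
      simpa using this
    have := humin _ hmem
    have := hdes
    rw [CoxeterSystem.IsLeftDescent] at this
    omega
  have hunoR : ∀ i ∈ I, ¬ cs.IsRightDescent u i := by
    intro i hi hdes
    have hmem : u * σ i ∈ {y : W | ∃ a ∈ Subgroup.closure (cs.simple '' K),
        ∃ b ∈ Subgroup.closure (cs.simple '' I), y = a * w * b} := by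
      have := hDCmem 1 (σ i) (one_mem _) (Subgroup.subset_closure ⟨i, hi, rfl⟩)
      simpa using this
    have := humin _ hmem
    have := hdes
    rw [CoxeterSystem.IsRightDescent] at this
    omega
  have hxnoR : ∀ i ∈ I, ¬ cs.IsRightDescent x i := by
    intro i hi hdes
    have hmem : x * σ i ∈ {y : W | ∃ a ∈ Subgroup.closure (cs.simple '' K),
        ∃ b ∈ Subgroup.closure (cs.simple '' I), y = a * w * b} :=
      ⟨a₁, ha₁, b₁ * σ i, mul_mem hb₁ (Subgroup.subset_closure ⟨i, hi, rfl⟩),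
        by rw [hx1]; group⟩
    have := hxmin _ hmem
    have := hdes
    rw [CoxeterSystem.IsRightDescent] at this
    omega
  -- minimal representation x = a * u * b
  have hSne : ({n : ℕ | ∃ a ∈ Subgroup.closure (cs.simple '' K),
      ∃ b ∈ Subgroup.closure (cs.simple '' I), x = a * u * b ∧ ℓ a + ℓ b = n}).Nonempty := by
    refine ⟨ℓ (a₁ * a₀⁻¹) + ℓ (b₀⁻¹ * b₁), a₁ * a₀⁻¹, mul_mem ha₁ (inv_mem ha₀),
      b₀⁻¹ * b₁, mul_mem (inv_mem hb₀) hb₁, ?_, rfl⟩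
    rw [hx1, hu0]
    group
  obtain ⟨a, ha, b, hb, hxab, hsum⟩ := Nat.sInf_mem hSne
  have hminrep : ∀ a' b' : W, a' ∈ Subgroup.closure (cs.simple '' K) →
      b' ∈ Subgroup.closure (cs.simple '' I) → x = a' * u * b' → ℓ a + ℓ b ≤ ℓ a' + ℓ b' := by
    intro a' b' ha' hb' hx'
    rw [hsum]
    exact Nat.sInf_le ⟨a', ha', b', hb', hx', rfl⟩
  have uminR : ∀ c ∈ Subgroup.closure (cs.simple '' I), ℓ u ≤ ℓ (u * c) :=
    min_of_no_right_descent cs I u hunoR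
  have uminL : ∀ c ∈ Subgroup.closure (cs.simple '' K), ℓ u ≤ ℓ (c * u) :=
    min_of_no_left_descent cs K u hunoL
  rcases Nat.eq_zero_or_pos (ℓ a) with ha0 | hapos
  · -- a = 1
    have ha1 : a = 1 := cs.length_eq_zero_iff.mp ha0
    subst ha1
    rw [one_mul] at hxab
    have xminR : ∀ c ∈ Subgroup.closure (cs.simple '' I), ℓ x ≤ ℓ (x * c) :=
      min_of_no_right_descent cs I x hxnoR
    have hadd := length_mul_of_min_right cs I x xminR b⁻¹ (inv_mem hb)
    have hxb : x * b⁻¹ = u := by rw [hxab]; group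
    rw [hxb] at hadd
    have hb0 : ℓ b⁻¹ = 0 := by omega
    have : b⁻¹ = 1 := cs.length_eq_zero_iff.mp hb0
    have hb1 : b = 1 := by
      rw [← inv_inv b, this, inv_one]
    rw [hb1, mul_one] at hxab
    exact hxab
  rcases Nat.eq_zero_or_pos (ℓ b) with hb0 | hbpos
  · have hb1 : b = 1 := cs.length_eq_zero_iff.mp hb0
    subst hb1
    rw [mul_one] at hxab
    have hadd := length_mul_of_min_left cs K u uminL a ha
    rw [← hxab] at hadd
    have ha0 : ℓ a = 0 := by omega
    have ha1 : a = 1 := cs.length_eq_zero_iff.mp ha0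
    rw [ha1, one_mul] at hxab
    exact hxab
  exfalso
  -- words
  obtain ⟨μ, hμred, hμ⟩ := cs.exists_reduced_word' u
  have hμlen : μ.length = ℓ u := by
    have h1 := hμred
    rw [CoxeterSystem.IsReduced] at h1
    rw [← h1, ← hμ]
  obtain ⟨β, hβI, hβred, hβπ⟩ := exists_reduced_word_alphabet cs I hb
  have hβlen : β.length = ℓ b := by
    have h1 := hβred
    rw [CoxeterSystem.IsReduced] at h1
    rw [← h1, hβπ]
  obtain ⟨α, hαK, hαred, hαπ⟩ := exists_reduced_word_alphabet cs K ha
  have hαlen : α.length = ℓ a := by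
    have h1 := hαred
    rw [CoxeterSystem.IsReduced] at h1
    rw [← h1, hαπ]
  have uaddR : ℓ (u * b) = ℓ u + ℓ b := length_mul_of_min_right cs I u uminR b hb
  have uaddL : ℓ (a * u) = ℓ a + ℓ u := length_mul_of_min_left cs K u uminL a ha
  -- Claim 1 : ℓ b + 2 ≤ ℓ a
  have ineq1 : ℓ b + 2 ≤ ℓ a := by
    rcases List.eq_nil_or_concat α with rfl | ⟨α', ia, hconcat⟩
    · simp at hαlen; omega
    rw [List.concat_eq_append] at hconcat
    subst hconcat
    have hia : ia ∈ K := hαK ia (by simp)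
    have hα'red : cs.IsReduced α' := by
      have h1 := CoxeterSystem.IsReduced.take hαred α'.length
      rwa [List.take_left] at h1
    have hα'len : α'.length = ℓ (π α') := hα'red.symm
    have haeq : a = π α' * σ ia := by
      rw [← hαπ, cs.wordProd_append, cs.wordProd_singleton]
    have hα'K : ∀ j ∈ α', j ∈ K := fun j hj => hαK j (by simp [hj])
    have hα'mem : π α' ∈ Subgroup.closure (cs.simple '' K) := wordProd_mem_closure cs K hα'K
    have hμβred : cs.IsReduced (μ ++ β) := by
      show ℓ (π (μ ++ β)) = (μ ++ β).length
      rw [cs.wordProd_append, ← hμ, hβπ, uaddR, List.length_append]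
      omega
    have hμβπ : π (μ ++ β) = u * b := by rw [cs.wordProd_append, ← hμ, hβπ]
    rcases cs.length_simple_mul (u * b) ia with hcase | hcase
    · -- ℓ (σ ia * (u * b)) = ℓ (u * b) + 1 : get the inequality
      have hxeq : x = π α' * (σ ia * (u * b)) := by
        rw [hxab, haeq]
        group
      have hge := cs.length_mul_ge_length_sub_length' (π α') (σ ia * (u * b))
      rw [← hxeq] at hge
      -- ℓ (σ ia * (u*b)) - ℓ (π α') ≤ ℓ x
      have hβα : α'.length = ℓ a - 1 := by
        rw [List.length_append] at hαlen
        simp at hαlen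
        omega
      rw [hcase, uaddR, hlen, ← hα'len, hβα] at hge
      omega
    · -- descent: exchange
      have hinvL : cs.IsLeftInversion (π (μ ++ β)) (σ ia) := by
        refine ⟨cs.isReflection_simple _, ?_⟩
        rw [hμβπ]
        omega
      obtain ⟨j, hj, hjeq⟩ := strongExchange_left cs hμβred hinvL
      rw [hμβπ] at hjeq
      rcases lt_or_ge j μ.length with hjμ | hjμ
      · rw [List.eraseIdx_append_of_lt_length hjμ, cs.wordProd_append, hβπ] at hjeq
        -- hjeq : π (μ.eraseIdx j) * b = σ ia * (u * b)
        have he : π (μ.eraseIdx j) = σ ia * u :=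
          mul_right_cancel (b := b) (by rw [hjeq, mul_assoc])
        have hle := cs.length_wordProd_le (μ.eraseIdx j)
        rw [List.length_eraseIdx, if_pos hjμ, hμlen, he] at hle
        have hdes : cs.IsLeftDescent u ia := by
          show ℓ (σ ia * u) < ℓ u
          omega
        exact absurd hdes (hunoL ia hia)
      · rw [List.eraseIdx_append_of_length_le hjμ, cs.wordProd_append, ← hμ] at hjeq
        -- hjeq : u * π (β.eraseIdx (j - μ.length)) = σ ia * (u * b)
        have hjβ : j - μ.length < β.length := by
          rw [List.length_append] at hj
          omega
        have hb₂mem : π (β.eraseIdx (j - μ.length)) ∈ Subgroup.closure (cs.simple '' I) :=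
          wordProd_mem_closure cs I
            (fun i hi => hβI i ((List.eraseIdx_sublist β (j - μ.length)).subset hi))
        have hb₂len := cs.length_wordProd_le (β.eraseIdx (j - μ.length))
        rw [List.length_eraseIdx, if_pos hjβ, hβlen] at hb₂len
        have hxrep : x = π α' * u * π (β.eraseIdx (j - μ.length)) := by
          have h3 : x = π α' * (σ ia * (u * b)) := by
            rw [hxab, haeq]
            group
          rw [h3, ← hjeq, ← mul_assoc]
        have := hminrep _ _ hα'mem hb₂mem hxrep
        rw [← hα'len] at this
        have hα'len2 : α'.length = ℓ a - 1 := by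
          rw [List.length_append] at hαlen
          simp at hαlen
          omega
        omega
  -- Claim 2 : ℓ a + 2 ≤ ℓ b
  have ineq2 : ℓ a + 2 ≤ ℓ b := by
    rcases β with _ | ⟨ib, β''⟩
    · simp at hβlen; omega
    have hib : ib ∈ I := hβI ib (by simp)
    have hβ''red : cs.IsReduced β'' := by
      have h1 := CoxeterSystem.IsReduced.drop (ω := ib :: β'') hβred 1
      simpa using h1
    have hβ''I : ∀ j ∈ β'', j ∈ I := fun j hj => hβI j (by simp [hj])
    have hβ''mem : π β'' ∈ Subgroup.closure (cs.simple '' I) := wordProd_mem_closure cs I hβ''I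
    have hbeq : b = σ ib * π β'' := by rw [← hβπ, cs.wordProd_cons]
    have hβ''len : β''.length = ℓ b - 1 := by
      simp at hβlen
      omega
    have hαμred : cs.IsReduced (α ++ μ) := by
      show ℓ (π (α ++ μ)) = (α ++ μ).length
      rw [cs.wordProd_append, ← hμ, hαπ, uaddL, List.length_append]
      omega
    have hαμπ : π (α ++ μ) = a * u := by rw [cs.wordProd_append, ← hμ, hαπ]
    rcases cs.length_mul_simple (a * u) ib with hcase | hcase
    · have hxeq : x = (a * u * σ ib) * π β'' := by
        rw [hxab, hbeq]
        group
      have hge := cs.length_mul_ge_length_sub_length (a * u * σ ib) (π β'')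
      rw [← hxeq] at hge
      have hβ''le := cs.length_wordProd_le β''
      rw [hcase, uaddL, hlen] at hge
      omega
    · have hinvR : cs.IsRightInversion (π (α ++ μ)) (σ ib) := by
        refine ⟨cs.isReflection_simple _, ?_⟩
        rw [hαμπ]
        omega
      obtain ⟨j, hj, hjeq⟩ := strongExchange_right cs hαμred hinvR
      rw [hαμπ] at hjeq
      rcases lt_or_ge j α.length with hjα | hjα
      · rw [List.eraseIdx_append_of_lt_length hjα, cs.wordProd_append, ← hμ] at hjeq
        -- hjeq : π (α.eraseIdx j) * u = a * u * σ ib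
        have ha₂mem : π (α.eraseIdx j) ∈ Subgroup.closure (cs.simple '' K) :=
          wordProd_mem_closure cs K
            (fun i hi => hαK i ((List.eraseIdx_sublist α j).subset hi))
        have ha₂len := cs.length_wordProd_le (α.eraseIdx j)
        rw [List.length_eraseIdx, if_pos hjα, hαlen] at ha₂len
        have hxrep : x = π (α.eraseIdx j) * u * π β'' := by
          have h3 : x = (a * u * σ ib) * π β'' := by
            rw [hxab, hbeq]
            group
          rw [h3, ← hjeq]
        have := hminrep _ _ ha₂mem hβ''mem hxrep
        have hβ''le := cs.length_wordProd_le β''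
        omega
      · rw [List.eraseIdx_append_of_length_le hjα, cs.wordProd_append, hαπ] at hjeq
        -- hjeq : a * π (μ.eraseIdx (j - α.length)) = a * u * σ ib
        have he : π (μ.eraseIdx (j - α.length)) = u * σ ib := by
          apply mul_left_cancel (a := a)
          rw [hjeq, mul_assoc]
        have hjμ2 : j - α.length < μ.length := by
          rw [List.length_append] at hj
          omega
        have hle := cs.length_wordProd_le (μ.eraseIdx (j - α.length))
        rw [List.length_eraseIdx, if_pos hjμ2, hμlen, he] at hle
        have hdes : cs.IsRightDescent u ib := by
          show ℓ (u * σ ib) < ℓ u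
          omega
        exact absurd hdes (hunoR ib hib)
  omega

lemma set_eq_simple_image {A : Set W} (hA : A ⊆ Set.range cs.simple) :
    cs.simple '' {i | cs.simple i ∈ A} = A := by
  ext x
  constructor
  · rintro ⟨i, hi, rfl⟩
    exact hi
  · intro hx
    obtain ⟨i, rfl⟩ := hA hx
    exact ⟨i, hx, rfl⟩

end BedardAux

/-!
Bédard's sequences attached to `w ∈ {}^{δ(J)}W` (Lusztig, "Nonsplit Hecke algebras and
perverse sheaves", §1.3).  STATEMENT 0: the sequence `(J_n)` is decreasing and both
sequences `(J_n)`, `(w_n)` are eventually constant.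
-/

theorem bedard_sequences_eventually_constant
    {B W : Type*} [Finite B] [Group W] {M : CoxeterMatrix B}
    (cs : CoxeterSystem M W) (δ : W ≃* W)
    (hδ : ⇑δ '' Set.range cs.simple = Set.range cs.simple)
    (J : Set W) (hJ : J ⊆ Set.range cs.simple)
    (w : W)
    (hw : ∀ a ∈ Subgroup.closure (⇑δ '' J),
      cs.length (a * w) = cs.length a + cs.length w)
    (Jn : ℕ → Set W) (wn : ℕ → W)
    (hJ0 : Jn 0 = J)
    (hJrec : ∀ n : ℕ,
      Jn (n + 1) = Jn n ∩ ⇑δ.symm '' {x : W | ∃ s ∈ Jn n, x = wn n * s * (wn n)⁻¹})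
    (hwn : ∀ n : ℕ,
      wn n ∈ {x : W | ∃ a ∈ Subgroup.closure (⇑δ '' J),
        ∃ b ∈ Subgroup.closure (Jn n), x = a * w * b} ∧
      ∀ x ∈ {x : W | ∃ a ∈ Subgroup.closure (⇑δ '' J),
        ∃ b ∈ Subgroup.closure (Jn n), x = a * w * b},
        cs.length (wn n) ≤ cs.length x) :
    (∀ n : ℕ, Jn (n + 1) ⊆ Jn n) ∧
      ∃ N : ℕ, ∀ n ≥ N, Jn n = Jn N ∧ wn n = wn N := by
  classical
  have hdec : ∀ n : ℕ, Jn (n + 1) ⊆ Jn n := by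
    intro n
    rw [hJrec n]
    exact Set.inter_subset_left
  refine ⟨hdec, ?_⟩
  have hchainJ : ∀ n, Jn n ⊆ J := by
    intro n
    induction n with
    | zero => rw [hJ0]
    | succ n ih => exact (hdec n).trans ih
  have hmono : ∀ m k, Jn (m + k) ⊆ Jn m := by
    intro m k
    induction k with
    | zero => exact subset_rfl
    | succ k ih => exact (hdec (m + k)).trans ih
  have hmono' : ∀ m n, m ≤ n → Jn n ⊆ Jn m := by
    intro m n h
    have : n = m + (n - m) := by omega
    rw [this]
    exact hmono m (n - m)
  have hfin : ∀ n, (Jn n).Finite := fun n =>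
    (Set.finite_range cs.simple).subset ((hchainJ n).trans hJ)
  set f : ℕ → ℕ := fun n => (Jn n).ncard with hf
  have hfanti : ∀ m n, m ≤ n → f n ≤ f m := fun m n h =>
    Set.ncard_le_ncard (hmono' m n h) (hfin m)
  have hrange : (Set.range f).Nonempty := ⟨f 0, 0, rfl⟩
  obtain ⟨N, hN⟩ := Nat.sInf_mem hrange
  have hfconst : ∀ n ≥ N, f n = f N := by
    intro n hn
    have h1 : f n ≤ f N := hfanti N n hn
    have h2 : sInf (Set.range f) ≤ f n := Nat.sInf_le ⟨n, rfl⟩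
    omega
  have hsetconst : ∀ n ≥ N, Jn n = Jn N := by
    intro n hn
    exact Set.eq_of_subset_of_ncard_le (hmono' N n hn)
      (le_of_eq (hfconst n hn).symm) (hfin N)
  refine ⟨N, fun n hn => ⟨hsetconst n hn, ?_⟩⟩
  -- wn n = wn N via uniqueness of minimal double coset elements
  have hδJ : ⇑δ '' J ⊆ Set.range cs.simple := by
    rw [← hδ]
    exact Set.image_mono hJ
  have hJnN : Jn N ⊆ Set.range cs.simple := (hchainJ N).trans hJ
  set K : Set B := {i | cs.simple i ∈ ⇑δ '' J} with hK
  set I : Set B := {i | cs.simple i ∈ Jn N} with hI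
  have hKimg : cs.simple '' K = ⇑δ '' J := BedardAux.set_eq_simple_image cs hδJ
  have hIimg : cs.simple '' I = Jn N := BedardAux.set_eq_simple_image cs hJnN
  have hseteq : {x : W | ∃ a ∈ Subgroup.closure (⇑δ '' J),
        ∃ b ∈ Subgroup.closure (Jn N), x = a * w * b}
      = {y : W | ∃ a ∈ Subgroup.closure (cs.simple '' K),
        ∃ b ∈ Subgroup.closure (cs.simple '' I), y = a * w * b} := by
    rw [hKimg, hIimg]
  obtain ⟨hmem_n, hmin_n⟩ := hwn n
  obtain ⟨hmem_N, hmin_N⟩ := hwn N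
  rw [hsetconst n hn] at hmem_n hmin_n
  rw [hseteq] at hmem_n hmin_n hmem_N hmin_N
  exact BedardAux.doubleCoset_min_unique cs K I w (wn N) (wn n)
    hmem_N hmem_n hmin_N hmin_n
end

section
/- Let T(J,δ) be the set of all sequences (J'_n, w'_n)_{n≥0}, with J'_n ⊆ S and w'_n ∈ W, such that J'_0 = J, J'_n = J'_{n−1} ∩ δ⁻¹(w'_{n−1} J'_{n−1} (w'_{n−1})⁻¹) for n ≥ 1, w'_n ∈ ^{δ(J'_n)}W^{J'_n} for n ≥ 0, and w'_n ∈ w'_{n−1} W_{J'_{n−1}} for n ≥ 1. Then for every element of T(J,δ) the sequence (w'_n) is eventually constant, with stable value denoted w'_∞, and the map κ : w ↦ (J_n, w_n)_{n≥0} is a bijection from ^{δ(J)}W onto T(J,δ) whose inverse is (J'_n, w'_n)_{n≥0} ↦ w'_∞. -/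
/-!
Bédard's bijection `κ : {}^{δ(J)}W ≃ T(J,δ)` (Lusztig, "Nonsplit Hecke algebras and
perverse sheaves", §1.3).  STATEMENT 2.
-/

namespace Bedard
open List CoxeterSystem

variable {B W : Type*} [Group W] {M : CoxeterMatrix B} (cs : CoxeterSystem M W)

local prefix:100 "σ" => cs.simple
local prefix:100 "π" => cs.wordProd
local prefix:100 "ℓ" => cs.length

noncomputable section
open Classical

set_option linter.unusedSectionVars false
set_option linter.unusedTactic false

/-- sign function -/
def eps (x t : W) : ℤˣ := if t = x then -1 else 1

lemma eps_conj (g x t : W) : eps x (g * t * g⁻¹) = eps (g⁻¹ * x * g) t := by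
  unfold eps
  by_cases h : t = g⁻¹ * x * g
  · rw [if_pos, if_pos h]
    rw [h]; group
  · rw [if_neg, if_neg h]
    intro hc
    apply h
    rw [← hc]; group

lemma eps_mul_self (x t : W) : eps x t * eps x t = 1 := by
  unfold eps; by_cases h : t = x <;> simp [h]

def sig (i : B) : W × ℤˣ → W × ℤˣ :=
  fun q => (σ i * q.1 * σ i, eps (σ i) q.1 * q.2)

lemma sig_invol (i : B) : Function.Involutive (sig cs i) := by
  rintro ⟨t, ε⟩
  unfold sig
  simp only [Prod.mk.injEq]
  constructor
  · calc σ i * (σ i * t * σ i) * σ i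
        = (σ i * σ i) * t * (σ i * σ i) := by group
      _ = t := by rw [cs.simple_mul_simple_self]; group
  · have h1 : σ i * t * σ i = (σ i) * t * (σ i)⁻¹ := by rw [cs.inv_simple]
    rw [h1, eps_conj, cs.inv_simple]
    have h2 : (σ i * σ i * σ i : W) = σ i := by
      rw [cs.simple_mul_simple_self]; group
    rw [h2, ← mul_assoc, eps_mul_self, one_mul]

def sigP (i : B) : Equiv.Perm (W × ℤˣ) := (sig_invol cs i).toPerm

@[simp] lemma sigP_apply (i : B) (q : W × ℤˣ) :
    sigP cs i q = (σ i * q.1 * σ i, eps (σ i) q.1 * q.2) := rfl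

lemma simple_conj_pow (i i' : B) (k : ℕ) :
    σ i' * (σ i * σ i') ^ k = ((σ i * σ i')⁻¹) ^ k * σ i' := by
  induction k with
  | zero => simp
  | succ k ih =>
      have h : σ i' * (σ i * σ i') = (σ i * σ i')⁻¹ * σ i' := by
        rw [mul_inv_rev, cs.inv_simple, cs.inv_simple]; group
      calc σ i' * (σ i * σ i') ^ (k + 1)
          = (σ i' * (σ i * σ i')) * (σ i * σ i') ^ k := by rw [pow_succ', ← mul_assoc]
        _ = (σ i * σ i')⁻¹ * (σ i' * (σ i * σ i') ^ k) := by rw [h, mul_assoc]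
        _ = (σ i * σ i')⁻¹ * (((σ i * σ i')⁻¹) ^ k * σ i') := by rw [ih]
        _ = ((σ i * σ i')⁻¹) ^ (k + 1) * σ i' := by rw [pow_succ', mul_assoc]

lemma liftable : CoxeterMatrix.IsLiftable M (sigP cs) := by
  intro i i'
  set m := M i i' with hm
  set p := σ i * σ i' with hp
  have hpm : p ^ m = 1 := cs.simple_mul_simple_pow i i'
  have hconj : ∀ X : W, σ i * (σ i' * X * σ i') * σ i = p * X * p⁻¹ := by
    intro X
    rw [hp, mul_inv_rev, cs.inv_simple, cs.inv_simple]
    group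
  have hcp : ∀ k : ℕ, σ i' * p ^ k = (p⁻¹) ^ k * σ i' := by
    intro k
    rw [hp]; exact simple_conj_pow cs i i' k
  have hsis : σ i' * σ i * σ i' = p⁻¹ * σ i' := by
    rw [hp, mul_inv_rev, cs.inv_simple, cs.inv_simple]
  have key : ∀ (k : ℕ) (t : W) (ε : ℤˣ),
      ((sigP cs i * sigP cs i') ^ k) (t, ε) =
        (p ^ k * t * (p ^ k)⁻¹,
          (∏ c ∈ Finset.range (2 * k), eps ((p⁻¹) ^ c * σ i') t) * ε) := by
    intro k
    induction k with
    | zero => intro t ε; simp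
    | succ k ih =>
        intro t ε
        rw [pow_succ', Equiv.Perm.mul_apply, ih]
        simp only [Equiv.Perm.mul_apply, sigP_apply]
        have e1 : σ i * (σ i' * (p ^ k * t * (p ^ k)⁻¹) * σ i') * σ i
            = p ^ (k + 1) * t * (p ^ (k + 1))⁻¹ := by
          rw [hconj, pow_succ']
          group
        have e2 : eps (σ i') (p ^ k * t * (p ^ k)⁻¹)
            = eps ((p⁻¹) ^ (2 * k) * σ i') t := by
          rw [eps_conj]
          have hX : (p ^ k)⁻¹ * σ i' * p ^ k = (p⁻¹) ^ (2 * k) * σ i' := by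
            calc (p ^ k)⁻¹ * σ i' * p ^ k
                = (p ^ k)⁻¹ * (σ i' * p ^ k) := by group
              _ = (p ^ k)⁻¹ * ((p⁻¹) ^ k * σ i') := by rw [hcp]
              _ = (p⁻¹) ^ (2 * k) * σ i' := by
                  rw [two_mul, pow_add, inv_pow]; group
          rw [hX]
        have e3 : eps (σ i) (σ i' * (p ^ k * t * (p ^ k)⁻¹) * σ i')
            = eps ((p⁻¹) ^ (2 * k + 1) * σ i') t := by
          have hg : σ i' * (p ^ k * t * (p ^ k)⁻¹) * σ i'
              = (σ i' * p ^ k) * t * (σ i' * p ^ k)⁻¹ := by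
            rw [mul_inv_rev, cs.inv_simple]
            group
          rw [hg, eps_conj]
          have hX : (σ i' * p ^ k)⁻¹ * σ i * (σ i' * p ^ k)
              = (p⁻¹) ^ (2 * k + 1) * σ i' := by
            rw [mul_inv_rev, cs.inv_simple]
            calc (p ^ k)⁻¹ * σ i' * σ i * (σ i' * p ^ k)
                = (p ^ k)⁻¹ * (σ i' * σ i * σ i') * p ^ k := by group
              _ = (p ^ k)⁻¹ * p⁻¹ * (σ i' * p ^ k) := by rw [hsis]; group
              _ = (p ^ k)⁻¹ * p⁻¹ * ((p⁻¹) ^ k * σ i') := by rw [hcp]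
              _ = (p⁻¹) ^ (2 * k + 1) * σ i' := by
                  rw [show 2 * k + 1 = k + 1 + k by omega, pow_add, pow_add,
                    pow_one, inv_pow]
                  group
          rw [hX]
        rw [e1, e2, e3]
        simp only [Prod.mk.injEq, true_and]
        rw [show 2 * (k + 1) = (2 * k) + 1 + 1 by omega,
          Finset.prod_range_succ, Finset.prod_range_succ]
        simp [mul_comm, mul_assoc, mul_left_comm]
  have hfin : ∀ q : W × ℤˣ, ((sigP cs i * sigP cs i') ^ m) q = q := by
    rintro ⟨t, ε⟩
    rw [key m t ε, hpm]
    have hper : ∀ c : ℕ, eps ((p⁻¹) ^ (m + c) * σ i') t = eps ((p⁻¹) ^ c * σ i') t := by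
      intro c
      congr 2
      rw [pow_add]
      have : (p⁻¹ : W) ^ m = 1 := by rw [inv_pow, hpm, inv_one]
      rw [this, one_mul]
    have : (∏ c ∈ Finset.range (2 * m), eps ((p⁻¹) ^ c * σ i') t) = 1 := by
      rw [two_mul, Finset.prod_range_add]
      have : (∏ c ∈ Finset.range m, eps ((p⁻¹) ^ (m + c) * σ i') t)
           = ∏ c ∈ Finset.range m, eps ((p⁻¹) ^ c * σ i') t := by
        apply Finset.prod_congr rfl
        intro c _
        exact hper c
      rw [this]
      generalize (∏ c ∈ Finset.range m, eps ((p⁻¹) ^ c * σ i') t) = u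
      exact Int.units_mul_self u
    rw [this, one_mul]
    simp
  apply Equiv.ext
  intro q
  exact (hfin q).trans (Equiv.Perm.one_apply q).symm

/-- The sign representation -/
def phi : W →* Equiv.Perm (W × ℤˣ) := cs.lift ⟨sigP cs, liftable cs⟩

@[simp] lemma phi_simple (i : B) : phi cs (σ i) = sigP cs i :=
  cs.lift_apply_simple (liftable cs) i

lemma leftInvSeq_cons' (i : B) (α : List B) :
    cs.leftInvSeq (i :: α) = σ i :: List.map (fun r => σ i * r * (σ i)⁻¹) (cs.leftInvSeq α) :=
  rfl

lemma phi_inv_wordProd (ω : List B) (t : W) (ε : ℤˣ) :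
    phi cs (π ω)⁻¹ (t, ε) =
      ((π ω)⁻¹ * t * π ω,
        (List.map (fun r => eps r t) (cs.leftInvSeq ω)).prod * ε) := by
  induction ω generalizing t ε with
  | nil => simp
  | cons i α ih =>
      have h1 : (π (i :: α))⁻¹ = (π α)⁻¹ * σ i := by
        rw [cs.wordProd_cons, mul_inv_rev, cs.inv_simple]
      rw [h1, map_mul, Equiv.Perm.mul_apply, phi_simple, sigP_apply]
      simp only
      rw [ih]
      simp only [Prod.mk.injEq]
      constructor
      · rw [cs.wordProd_cons]
        group
      · rw [leftInvSeq_cons', List.map_cons, List.map_map, List.prod_cons]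
        have hmap : ∀ r : W, eps r (σ i * t * σ i)
            = eps (σ i * r * (σ i)⁻¹) t := by
          intro r
          conv_lhs => rw [show σ i * t * σ i = σ i * t * (σ i)⁻¹ by rw [cs.inv_simple]]
          rw [eps_conj]
          congr 1
          rw [cs.inv_simple]
        have : List.map (fun r => eps r (σ i * t * σ i)) (cs.leftInvSeq α)
            = List.map ((fun r => eps r t) ∘ fun r => σ i * r * (σ i)⁻¹)
                (cs.leftInvSeq α) := by
          apply List.map_congr_left
          intro r _
          exact hmap r
        rw [this]
        simp [mul_comm, mul_assoc, mul_left_comm]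

/-- the sign cocycle -/
def eta (w t : W) : ℤˣ := (phi cs w⁻¹ (t, 1)).2

lemma eta_wordProd (ω : List B) (t : W) :
    eta cs (π ω) t = (List.map (fun r => eps r t) (cs.leftInvSeq ω)).prod := by
  rw [eta, phi_inv_wordProd, mul_one]

lemma phi_inv_apply (w t : W) (ε : ℤˣ) :
    phi cs w⁻¹ (t, ε) = (w⁻¹ * t * w, eta cs w t * ε) := by
  obtain ⟨ω, rfl⟩ := cs.wordProd_surjective w
  rw [phi_inv_wordProd, eta_wordProd]

lemma eta_mul (u v t : W) :
    eta cs (u * v) t = eta cs u t * eta cs v (u⁻¹ * t * u) := by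
  have h1 := phi_inv_apply cs u t 1
  have h2 := phi_inv_apply cs v (u⁻¹ * t * u) (eta cs u t * 1)
  show (phi cs (u * v)⁻¹ (t, 1)).2 = _
  rw [mul_inv_rev, map_mul, Equiv.Perm.mul_apply, h1, h2]
  simp only [mul_one]
  exact mul_comm _ _

lemma eta_simple (i : B) (t : W) : eta cs (σ i) t = eps (σ i) t := by
  rw [← cs.wordProd_singleton, eta_wordProd]
  simp

lemma eta_conj_step (j : B) (r : W) (hr : eta cs r r = -1) :
    eta cs (σ j * r * (σ j)⁻¹) (σ j * r * (σ j)⁻¹) = -1 := by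
  rw [show σ j * r * (σ j)⁻¹ = σ j * (r * (σ j)⁻¹) by group]
  rw [eta_mul]
  rw [show (σ j)⁻¹ * (σ j * (r * (σ j)⁻¹)) * σ j = r by group]
  rw [eta_mul]
  rw [show r⁻¹ * r * r = r by group]
  rw [hr, cs.inv_simple, eta_simple, eta_simple]
  by_cases h : r = σ j
  · subst h
    rw [cs.simple_mul_simple_self, mul_one]
    rw [show eps (σ j) (σ j) = -1 from if_pos rfl]
    decide
  · have h2 : σ j * (r * σ j) ≠ σ j := by
      intro hc
      apply h
      have h3 : r = (σ j)⁻¹ * (σ j * (r * σ j)) * (σ j)⁻¹ := by group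
      rw [hc] at h3
      have h4 : (σ j)⁻¹ * σ j * (σ j)⁻¹ = (σ j)⁻¹ := by group
      rw [h4, cs.inv_simple] at h3
      exact h3
    rw [show eps (σ j) r = 1 from if_neg h,
      show eps (σ j) (σ j * (r * σ j)) = 1 from if_neg h2]
    decide

lemma eta_conj_refl (ω : List B) (i : B) :
    eta cs (π ω * σ i * (π ω)⁻¹) (π ω * σ i * (π ω)⁻¹) = -1 := by
  induction ω with
  | nil => simp [eta_simple, eps]
  | cons j α ih =>
      have ht : π (j :: α) * σ i * (π (j :: α))⁻¹
          = σ j * (π α * σ i * (π α)⁻¹) * (σ j)⁻¹ := by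
        rw [cs.wordProd_cons]; group
      rw [ht]
      exact eta_conj_step cs j _ ih

lemma eta_reflection {t : W} (ht : cs.IsReflection t) : eta cs t t = -1 := by
  obtain ⟨w, i, rfl⟩ := ht
  obtain ⟨ω, rfl⟩ := cs.wordProd_surjective w
  exact eta_conj_refl cs ω i

lemma exists_eraseIdx_of_eta_neg {ω : List B} {t : W} (h : eta cs (π ω) t = -1) :
    ∃ j, j < ω.length ∧ t * π ω = π (ω.eraseIdx j) := by
  have hmem : t ∈ cs.leftInvSeq ω := by
    by_contra hmem
    rw [eta_wordProd] at h
    have : (List.map (fun r => eps r t) (cs.leftInvSeq ω)).prod = 1 := by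
      apply List.prod_eq_one
      intro x hx
      obtain ⟨r, hrmem, rfl⟩ := List.mem_map.mp hx
      rw [eps, if_neg]
      intro hc; exact hmem (hc ▸ hrmem)
    rw [this] at h
    exact absurd h (by decide)
  obtain ⟨j, hj, hget⟩ := List.mem_iff_getElem.mp hmem
  rw [cs.length_leftInvSeq] at hj
  refine ⟨j, hj, ?_⟩
  rw [← hget, ← List.getD_eq_getElem _ 1, cs.getD_leftInvSeq_mul_wordProd]

lemma length_lt_of_eta_neg {w t : W} (h : eta cs w t = -1) : ℓ (t * w) < ℓ w := by
  obtain ⟨ω, hlen, rfl⟩ := cs.exists_reduced_word w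
  obtain ⟨j, hj, heq⟩ := exists_eraseIdx_of_eta_neg cs h
  rw [heq]
  calc ℓ (π (ω.eraseIdx j)) ≤ (ω.eraseIdx j).length := cs.length_wordProd_le _
    _ < ω.length := by rw [← List.length_eraseIdx_add_one hj]; exact lt_add_one _
    _ = ℓ (π ω) := (show ℓ (π ω) = ω.length from hlen).symm

lemma eta_neg_of_length_lt {w t : W} (ht : cs.IsReflection t) (hlt : ℓ (t * w) < ℓ w) :
    eta cs w t = -1 := by
  rcases Int.units_eq_one_or (eta cs w t) with h | h
  · exfalso
    have h1 : eta cs (t * w) t = -1 := by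
      rw [eta_mul, eta_reflection cs ht, show t⁻¹ * t * t = t by group, h]
      decide
    have h2 := length_lt_of_eta_neg cs h1
    rw [← mul_assoc, ht.mul_self, one_mul] at h2
    omega
  · exact h

/-- The strong exchange property -/
theorem strongExchange {w t : W} (ht : cs.IsReflection t) (hlt : ℓ (t * w) < ℓ w)
    {ω : List B} (hπ : w = π ω) :
    ∃ j, j < ω.length ∧ t * w = π (ω.eraseIdx j) := by
  subst hπ
  exact exists_eraseIdx_of_eta_neg cs (eta_neg_of_length_lt cs ht hlt)

/-! ### Phase 2: parabolic subgroups -/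

def IsSWord (S₀ : Set W) (ω : List B) : Prop := ∀ i ∈ ω, cs.simple i ∈ S₀

lemma wordProd_mem_closure {S₀ : Set W} {ω : List B} (hω : IsSWord cs S₀ ω) :
    π ω ∈ Subgroup.closure S₀ := by
  induction ω with
  | nil => simpa using Subgroup.one_mem _
  | cons i α ih =>
      rw [cs.wordProd_cons]
      exact mul_mem (Subgroup.subset_closure (hω i (List.mem_cons_self)))
        (ih (fun j hj => hω j (List.mem_cons_of_mem i hj)))

lemma exists_sword {S₀ : Set W} (hS₀ : S₀ ⊆ Set.range cs.simple) {w : W}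
    (hw : w ∈ Subgroup.closure S₀) : ∃ ω, IsSWord cs S₀ ω ∧ w = π ω := by
  refine Subgroup.closure_induction ?_ ?_ ?_ ?_ hw
  · intro x hx
    obtain ⟨i, rfl⟩ := hS₀ hx
    exact ⟨[i], fun j hj => by rw [List.mem_singleton.mp hj]; exact hx,
      (cs.wordProd_singleton i).symm⟩
  · exact ⟨[], fun j hj => absurd hj List.not_mem_nil, by simp⟩
  · rintro x y _ _ ⟨ω₁, hω₁, rfl⟩ ⟨ω₂, hω₂, rfl⟩
    exact ⟨ω₁ ++ ω₂, fun j hj => (List.mem_append.mp hj).elim (hω₁ j) (hω₂ j),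
      (cs.wordProd_append ω₁ ω₂).symm⟩
  · rintro x _ ⟨ω, hω, rfl⟩
    exact ⟨ω.reverse, fun j hj => hω j (List.mem_reverse.mp hj),
      (cs.wordProd_reverse ω).symm⟩

lemma exists_reduced_subword : ∀ (n : ℕ) (ω : List B), ω.length ≤ n →
    ∃ ω', cs.IsReduced ω' ∧ π ω' = π ω ∧ ∀ i ∈ ω', i ∈ ω := by
  intro n
  induction n with
  | zero =>
      intro ω hω
      rw [Nat.le_zero, List.length_eq_zero_iff] at hω
      subst hω
      exact ⟨[], by simp [CoxeterSystem.IsReduced], rfl, fun i hi => hi⟩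
  | succ n ih =>
      intro ω hω
      by_cases hred : cs.IsReduced ω
      · exact ⟨ω, hred, rfl, fun i hi => hi⟩
      · have hP : ∃ k, ¬ cs.IsReduced (ω.take k) := ⟨ω.length, by rwa [List.take_length]⟩
        classical
        set k₀ := Nat.find hP with hk₀def
        have hk₀ : ¬ cs.IsReduced (ω.take k₀) := Nat.find_spec hP
        have hk₀pos : k₀ ≠ 0 := by
          intro h0
          rw [h0] at hk₀
          exact hk₀ (by simp [CoxeterSystem.IsReduced])
        have hk₀le : k₀ ≤ ω.length := Nat.find_min' hP (by rwa [List.take_length])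
        set k := k₀ - 1 with hkdef
        have hklt : k < ω.length := by omega
        have hredk : cs.IsReduced (ω.take k) := by
          by_contra hc
          exact absurd (Nat.find_min' hP hc) (by omega)
        have htake : ω.take k ++ [ω[k]] = ω.take (k + 1) := List.take_concat_get' ω k hklt
        have hk1 : k + 1 = k₀ := by omega
        have hnred1 : ¬ cs.IsReduced (ω.take k ++ [ω[k]]) := by
          rw [htake, hk1]; exact hk₀
        have hlb : ℓ (π (ω.take k)) = k := by
          have h1 : ℓ (π (ω.take k)) = (ω.take k).length := hredk
          rwa [List.length_take, min_eq_left (by omega)] at h1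
        have hlt : ℓ (π (ω.take k) * σ (ω[k])) < ℓ (π (ω.take k)) := by
          have h2 : π (ω.take k ++ [ω[k]]) = π (ω.take k) * σ (ω[k]) := by
            rw [cs.wordProd_append, cs.wordProd_singleton]
          have h3 : ℓ (π (ω.take k) * σ (ω[k])) ≠ k + 1 := by
            intro hc
            apply hnred1
            show ℓ (π (ω.take k ++ [ω[k]])) = _
            rw [h2, hc, List.length_append, List.length_take, min_eq_left (by omega)]
            simp
          rcases cs.length_mul_simple (π (ω.take k)) (ω[k]) with h4 | h4
          · rw [hlb] at h4; exact absurd h4 h3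
          · omega
        have hrefl : cs.IsReflection (π (ω.take k) * σ (ω[k]) * (π (ω.take k))⁻¹) :=
          ⟨π (ω.take k), ω[k], rfl⟩
        have hlt' : ℓ ((π (ω.take k) * σ (ω[k]) * (π (ω.take k))⁻¹) * π (ω.take k))
            < ℓ (π (ω.take k)) := by
          rw [show (π (ω.take k) * σ (ω[k]) * (π (ω.take k))⁻¹) * π (ω.take k)
            = π (ω.take k) * σ (ω[k]) by group]
          exact hlt
        obtain ⟨j, hj, hdel⟩ := strongExchange cs hrefl hlt' rfl
        have heq : π (ω.take k) * σ (ω[k]) = π ((ω.take k).eraseIdx j) := by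
          rw [← hdel]; group
        have hπω : π ((ω.take k).eraseIdx j ++ ω.drop (k + 1)) = π ω := by
          conv_rhs => rw [← List.take_append_drop (k + 1) ω]
          rw [cs.wordProd_append, cs.wordProd_append, ← heq, ← htake,
            cs.wordProd_append, cs.wordProd_singleton]
        have hlen : ((ω.take k).eraseIdx j ++ ω.drop (k + 1)).length ≤ n := by
          rw [List.length_append, List.length_drop]
          have h5 : ((ω.take k).eraseIdx j).length + 1 = (ω.take k).length :=
            List.length_eraseIdx_add_one hj
          rw [List.length_take, min_eq_left (by omega)] at h5
          omega
        obtain ⟨ω', hred', hπ', hmem'⟩ := ih _ hlen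
        refine ⟨ω', hred', by rw [hπ', hπω], ?_⟩
        intro i hi
        rcases List.mem_append.mp (hmem' i hi) with h6 | h6
        · exact List.mem_of_mem_take ((List.eraseIdx_sublist _ j).mem h6)
        · exact List.mem_of_mem_drop h6

lemma exists_reduced_sword {S₀ : Set W} (hS₀ : S₀ ⊆ Set.range cs.simple) {w : W}
    (hw : w ∈ Subgroup.closure S₀) :
    ∃ ω, IsSWord cs S₀ ω ∧ cs.IsReduced ω ∧ w = π ω := by
  obtain ⟨ω, hω, rfl⟩ := exists_sword cs hS₀ hw
  obtain ⟨ω', hred', hπ', hmem'⟩ := exists_reduced_subword cs ω.length ω le_rfl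
  exact ⟨ω', fun j hj => hω j (hmem' j hj), hred', hπ'.symm⟩

lemma rmin_of_min {S₀ : Set W} (hS₀ : S₀ ⊆ Set.range cs.simple) {w : W}
    (hmin : ∀ b ∈ Subgroup.closure S₀, ℓ w ≤ ℓ (w * b)) :
    ∀ b ∈ Subgroup.closure S₀, ℓ (w * b) = ℓ w + ℓ b := by
  have aux : ∀ β : List B, IsSWord cs S₀ β → cs.IsReduced β →
      ℓ (w * π β) = ℓ w + ℓ (π β) := by
    intro β
    induction β using List.reverseRecOn with
    | nil => simp
    | append_singleton β' i ih =>
        intro hsw hred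
        have hsw' : IsSWord cs S₀ β' := fun j hj => hsw j (by simp [hj])
        have hred' : cs.IsReduced β' := by
          have h1 := CoxeterSystem.IsReduced.take hred β'.length
          rwa [List.take_left] at h1
        have hσmem : σ i ∈ S₀ := hsw i (by simp)
        have hlβ : ℓ (π β' * σ i) = β'.length + 1 := by
          have h1 : ℓ (π (β' ++ [i])) = (β' ++ [i]).length := hred
          rwa [cs.wordProd_append, cs.wordProd_singleton, List.length_append,
            List.length_singleton] at h1
        have hlβ' : ℓ (π β') = β'.length := hred'
        have ih' := ih hsw' hred'
        rw [cs.wordProd_append, cs.wordProd_singleton, ← mul_assoc, hlβ]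
        rcases cs.length_mul_simple (w * π β') i with h4 | h4
        · rw [h4, ih', hlβ']; omega
        · exfalso
          obtain ⟨γ, hγlen, hγ⟩ := cs.exists_reduced_word w
          have hγlen : γ.length = ℓ w := by rw [hγ]; exact (show ℓ (π γ) = γ.length from hγlen).symm
          have hπconc : π (γ ++ β') = w * π β' := by
            rw [cs.wordProd_append, ← hγ]
          have hrefl : cs.IsReflection ((w * π β') * σ i * (w * π β')⁻¹) :=
            ⟨w * π β', i, rfl⟩
          have hlt' : ℓ (((w * π β') * σ i * (w * π β')⁻¹) * (w * π β'))
              < ℓ (w * π β') := by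
            rw [show ((w * π β') * σ i * (w * π β')⁻¹) * (w * π β')
              = (w * π β') * σ i by group]
            omega
          obtain ⟨j, hj, hdel⟩ := strongExchange cs hrefl hlt' hπconc.symm
          have heq : (w * π β') * σ i = π ((γ ++ β').eraseIdx j) := by
            rw [← hdel]; group
          rw [List.length_append] at hj
          by_cases hcase : j < γ.length
          · rw [List.eraseIdx_append_of_lt_length hcase, cs.wordProd_append] at heq
            have h5 : w * (π β' * σ i * (π β')⁻¹) = π (γ.eraseIdx j) := by
              rw [show w * (π β' * σ i * (π β')⁻¹) = ((w * π β') * σ i) * (π β')⁻¹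
                by group, heq]
              group
            have hmem : π β' * σ i * (π β')⁻¹ ∈ Subgroup.closure S₀ :=
              mul_mem (mul_mem (wordProd_mem_closure cs hsw')
                (Subgroup.subset_closure hσmem))
                (inv_mem (wordProd_mem_closure cs hsw'))
            have h6 := hmin _ hmem
            rw [h5] at h6
            have h7 : ℓ (π (γ.eraseIdx j)) ≤ (γ.eraseIdx j).length :=
              cs.length_wordProd_le _
            have h8 : (γ.eraseIdx j).length + 1 = γ.length :=
              List.length_eraseIdx_add_one hcase
            omega
          · push_neg at hcase
            rw [List.eraseIdx_append_of_length_le hcase, cs.wordProd_append, ← hγ] at heq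
            rw [mul_assoc] at heq
            have h5 := mul_left_cancel heq
            have h6 : ℓ (π β' * σ i) ≤ (β'.eraseIdx (j - γ.length)).length := by
              rw [h5]; exact cs.length_wordProd_le _
            have h7 : (β'.eraseIdx (j - γ.length)).length + 1 = β'.length :=
              List.length_eraseIdx_add_one (by omega)
            omega
  intro b hb
  obtain ⟨β, hsw, hred, rfl⟩ := exists_reduced_sword cs hS₀ hb
  exact aux β hsw hred

lemma lmin_of_min {S₀ : Set W} (hS₀ : S₀ ⊆ Set.range cs.simple) {w : W}
    (hmin : ∀ a ∈ Subgroup.closure S₀, ℓ w ≤ ℓ (a * w)) :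
    ∀ a ∈ Subgroup.closure S₀, ℓ (a * w) = ℓ a + ℓ w := by
  have h := rmin_of_min cs hS₀ (w := w⁻¹) ?_
  · intro a ha
    have h2 := h a⁻¹ (inv_mem ha)
    rw [show w⁻¹ * a⁻¹ = (a * w)⁻¹ by group, cs.length_inv, cs.length_inv,
      cs.length_inv] at h2
    omega
  · intro b hb
    have h3 := hmin b⁻¹ (inv_mem hb)
    rw [show w⁻¹ * b = (b⁻¹ * w)⁻¹ by group, cs.length_inv, cs.length_inv]
    exact h3

lemma rmin_of_noRDesc {S₀ : Set W} (hS₀ : S₀ ⊆ Set.range cs.simple) {w : W}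
    (h : ∀ i : B, σ i ∈ S₀ → ℓ (w * σ i) = ℓ w + 1) :
    ∀ b ∈ Subgroup.closure S₀, ℓ (w * b) = ℓ w + ℓ b := by
  classical
  have hex : ∃ n, ∃ b ∈ Subgroup.closure S₀, ℓ (w * b) = n :=
    ⟨ℓ w, 1, one_mem _, by simp⟩
  obtain ⟨b₀, hb₀, hlb₀⟩ := Nat.find_spec hex
  have hmind : ∀ c ∈ Subgroup.closure S₀, ℓ (w * b₀) ≤ ℓ (w * b₀ * c) := by
    intro c hc
    rw [hlb₀]
    exact Nat.find_min' hex ⟨b₀ * c, mul_mem hb₀ hc, by rw [mul_assoc]⟩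
  have hd := rmin_of_min cs hS₀ (w := w * b₀) hmind
  have hb1 : b₀ = 1 := by
    by_contra hb1
    obtain ⟨ρ, hρsw, hρred, hρ⟩ := exists_reduced_sword cs hS₀ (inv_mem hb₀)
    rcases List.eq_nil_or_concat ρ with h0 | ⟨ρ', i, rfl⟩
    · apply hb1
      rw [h0] at hρ
      simp at hρ
      exact hρ
    · rw [List.concat_eq_append] at *
      have hρ' : b₀⁻¹ = π ρ' * σ i := by
        rw [hρ, cs.wordProd_append, cs.wordProd_singleton]
      have hσmem : σ i ∈ S₀ := hρsw i (by simp)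
      have hρ'sw : IsSWord cs S₀ ρ' := fun j hj => hρsw j (by simp [hj])
      have hρ'red : cs.IsReduced ρ' := by
        have h1 := CoxeterSystem.IsReduced.take hρred ρ'.length
        rwa [List.take_left] at h1
      have hwσ : w * σ i = (w * b₀) * π ρ' := by
        rw [show (w * b₀) * π ρ' = w * (b₀ * (π ρ' * σ i) * σ i) * (σ i * σ i)⁻¹
          by group, ← hρ', cs.simple_mul_simple_self]
        group
      have h2 : ℓ (w * σ i) = ℓ (w * b₀) + ℓ (π ρ') :=
        hwσ ▸ hd _ (wordProd_mem_closure cs hρ'sw)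
      have h3 : ℓ w = ℓ (w * b₀) + ℓ b₀⁻¹ := by
        have := hd b₀⁻¹ (inv_mem hb₀)
        rwa [mul_assoc, mul_inv_cancel, mul_one] at this
      have h4 : ℓ b₀⁻¹ = ρ'.length + 1 := by
        have h5 : ℓ (π (ρ' ++ [i])) = (ρ' ++ [i]).length := hρred
        rw [← hρ] at h5
        rwa [List.length_append, List.length_singleton] at h5
      have h6 : ℓ (π ρ') = ρ'.length := hρ'red
      have h7 := h i hσmem
      omega
  subst hb1
  rw [mul_one] at hd
  exact hd

lemma lmin_of_noLDesc {S₀ : Set W} (hS₀ : S₀ ⊆ Set.range cs.simple) {w : W}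
    (h : ∀ i : B, σ i ∈ S₀ → ℓ (σ i * w) = ℓ w + 1) :
    ∀ a ∈ Subgroup.closure S₀, ℓ (a * w) = ℓ a + ℓ w := by
  have h' : ∀ i : B, σ i ∈ S₀ → ℓ (w⁻¹ * σ i) = ℓ w⁻¹ + 1 := by
    intro i hi
    rw [show w⁻¹ * σ i = (σ i * w)⁻¹ by rw [mul_inv_rev, cs.inv_simple],
      cs.length_inv, cs.length_inv]
    exact h i hi
  have hd := rmin_of_noRDesc cs hS₀ h'
  intro a ha
  have h2 := hd a⁻¹ (inv_mem ha)
  rw [show w⁻¹ * a⁻¹ = (a * w)⁻¹ by group, cs.length_inv, cs.length_inv,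
    cs.length_inv] at h2
  omega

/-! ### Phase 3: double cosets -/

def DC (S₁ S₂ : Set W) (u : W) : Set W :=
  {x | ∃ a ∈ Subgroup.closure S₁, ∃ b ∈ Subgroup.closure S₂, x = a * u * b}

lemma self_mem_DC (S₁ S₂ : Set W) (u : W) : u ∈ DC S₁ S₂ u :=
  ⟨1, one_mem _, 1, one_mem _, by group⟩

lemma DC_eq_of_mem {S₁ S₂ : Set W} {u x : W} (hx : x ∈ DC S₁ S₂ u) :
    DC S₁ S₂ x = DC S₁ S₂ u := by
  obtain ⟨a₀, ha₀, b₀, hb₀, rfl⟩ := hx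
  ext y
  constructor
  · rintro ⟨a, ha, b, hb, rfl⟩
    exact ⟨a * a₀, mul_mem ha ha₀, b₀ * b, mul_mem hb₀ hb, by group⟩
  · rintro ⟨a, ha, b, hb, rfl⟩
    exact ⟨a * a₀⁻¹, mul_mem ha (inv_mem ha₀), b₀⁻¹ * b, mul_mem (inv_mem hb₀) hb, by group⟩

lemma double_decomp {S₁ S₂ : Set W} (h₁ : S₁ ⊆ Set.range cs.simple)
    (h₂ : S₂ ⊆ Set.range cs.simple) {d : W}
    (hL : ∀ a ∈ Subgroup.closure S₁, ℓ (a * d) = ℓ a + ℓ d)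
    (hR : ∀ b ∈ Subgroup.closure S₂, ℓ (d * b) = ℓ d + ℓ b) :
    ∀ a ∈ Subgroup.closure S₁, ∀ b ∈ Subgroup.closure S₂,
      ∃ a' ∈ Subgroup.closure S₁, ∃ b' ∈ Subgroup.closure S₂,
        a * d * b = a' * d * b' ∧ ℓ (a * d * b) = ℓ a' + ℓ d + ℓ b' := by
  classical
  have main : ∀ N : ℕ, ∀ a ∈ Subgroup.closure S₁, ∀ b ∈ Subgroup.closure S₂,
      ℓ a + ℓ b ≤ N →
      ∃ a' ∈ Subgroup.closure S₁, ∃ b' ∈ Subgroup.closure S₂,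
        a * d * b = a' * d * b' ∧ ℓ (a * d * b) = ℓ a' + ℓ d + ℓ b' := by
    intro N
    induction N with
    | zero =>
        intro a ha b hb hab
        have ha1 : a = 1 := cs.length_eq_zero_iff.mp (by omega)
        have hb1 : b = 1 := cs.length_eq_zero_iff.mp (by omega)
        subst ha1; subst hb1
        exact ⟨1, one_mem _, 1, one_mem _, rfl, by simp⟩
    | succ N ih =>
        intro a ha b hb hab
        have hLa := hL a ha
        by_cases hfull : ℓ (a * d * b) = ℓ (a * d) + ℓ b
        · exact ⟨a, ha, b, hb, rfl, by omega⟩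
        obtain ⟨β, hβsw, hβred, rfl⟩ := exists_reduced_sword cs h₂ hb
        have hβlen : ℓ (π β) = β.length := hβred
        have hP : ∃ k, ¬ (ℓ (a * d * π (β.take k)) = ℓ (a * d) + k) := by
          refine ⟨β.length, ?_⟩
          rw [List.take_length, ← hβlen]
          exact hfull
        obtain ⟨k₀, hk₀, hk₀min, hk₀le⟩ :
            ∃ k₀, ¬ (ℓ (a * d * π (β.take k₀)) = ℓ (a * d) + k₀) ∧
              (∀ m, m < k₀ → ℓ (a * d * π (β.take m)) = ℓ (a * d) + m) ∧
              k₀ ≤ β.length := by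
          refine ⟨Nat.find hP, Nat.find_spec hP, fun m hm => ?_, ?_⟩
          · by_contra hc
            exact absurd (Nat.find_min' hP hc) (by omega)
          · refine Nat.find_min' hP ?_
            rw [List.take_length, ← hβlen]
            exact hfull
        have hk₀pos : k₀ ≠ 0 := by
          intro h0
          rw [h0] at hk₀
          exact hk₀ (by simp)
        set k := k₀ - 1 with hkdef
        have hklt : k < β.length := by omega
        have hQ : ℓ (a * d * π (β.take k)) = ℓ (a * d) + k := hk₀min k (by omega)
        have htake : β.take k ++ [β[k]] = β.take (k + 1) := List.take_concat_get' β k hklt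
        have hk1 : k + 1 = k₀ := by omega
        have hπk1 : π (β.take (k+1)) = π (β.take k) * σ (β[k]) := by
          rw [← htake, cs.wordProd_append, cs.wordProd_singleton]
        have hne : ℓ (a * d * π (β.take k) * σ (β[k])) ≠ ℓ (a * d) + k + 1 := by
          intro hc
          apply hk₀
          rw [← hk1, hπk1, ← mul_assoc, hc]
          omega
        have hdesc : ℓ (a * d * π (β.take k) * σ (β[k])) + 1 = ℓ (a * d * π (β.take k)) := by
          rcases cs.length_mul_simple (a * d * π (β.take k)) (β[k]) with h4 | h4
          · rw [hQ] at h4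
            exact absurd h4 hne
          · exact h4
        obtain ⟨α, hαsw, hαred, hαeq⟩ := exists_reduced_sword cs h₁ ha
        have hαlen : ℓ a = α.length := by rw [hαeq]; exact hαred
        obtain ⟨μ, hμlen, hμeq⟩ := cs.exists_reduced_word d
        have hμlen : μ.length = ℓ d := by rw [hμeq]; exact (show ℓ (π μ) = μ.length from hμlen).symm
        have hπx : a * d * π (β.take k) = π (α ++ (μ ++ β.take k)) := by
          rw [cs.wordProd_append, cs.wordProd_append, ← hαeq, ← hμeq, mul_assoc]
        have hrefl : cs.IsReflection ((a * d * π (β.take k)) * σ (β[k])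
            * (a * d * π (β.take k))⁻¹) := ⟨a * d * π (β.take k), β[k], rfl⟩
        have hlt' : ℓ (((a * d * π (β.take k)) * σ (β[k]) * (a * d * π (β.take k))⁻¹)
            * (a * d * π (β.take k))) < ℓ (a * d * π (β.take k)) := by
          rw [show ((a * d * π (β.take k)) * σ (β[k]) * (a * d * π (β.take k))⁻¹)
            * (a * d * π (β.take k)) = (a * d * π (β.take k)) * σ (β[k]) by group]
          omega
        obtain ⟨j, hj, hdel⟩ := strongExchange cs hrefl hlt' hπx
        have heq : (a * d * π (β.take k)) * σ (β[k])
            = π ((α ++ (μ ++ β.take k)).eraseIdx j) := by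
          rw [← hdel]; group
        rw [List.length_append, List.length_append] at hj
        have hσmem : σ (β[k]) ∈ S₂ := hβsw _ (β.getElem_mem hklt)
        have hβk_take_sw : IsSWord cs S₂ (β.take k) :=
          fun l hl => hβsw l (List.mem_of_mem_take hl)
        have hβdrop_sw : IsSWord cs S₂ (β.drop (k+1)) :=
          fun l hl => hβsw l (List.mem_of_mem_drop hl)
        have hbsplit : a * d * π β
            = ((a * d * π (β.take k)) * σ (β[k])) * π (β.drop (k+1)) := by
          conv_lhs => rw [← List.take_append_drop (k+1) β]
          rw [cs.wordProd_append, hπk1]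
          group
        by_cases hc1 : j < α.length
        · rw [List.eraseIdx_append_of_lt_length hc1, cs.wordProd_append,
            cs.wordProd_append, ← hμeq] at heq
          have ha'sw : IsSWord cs S₁ (α.eraseIdx j) :=
            fun l hl => hαsw l ((List.eraseIdx_sublist α j).mem hl)
          have ha' : π (α.eraseIdx j) ∈ Subgroup.closure S₁ := wordProd_mem_closure cs ha'sw
          have ha'len : ℓ (π (α.eraseIdx j)) + 1 ≤ ℓ a := by
            have h5 : ℓ (π (α.eraseIdx j)) ≤ (α.eraseIdx j).length := cs.length_wordProd_le _
            have h6 : (α.eraseIdx j).length + 1 = α.length := List.length_eraseIdx_add_one hc1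
            omega
          have hbnewsw : IsSWord cs S₂ (β.take k ++ β.drop (k+1)) := fun l hl =>
            (List.mem_append.mp hl).elim (hβk_take_sw l) (hβdrop_sw l)
          have hbnew : π (β.take k ++ β.drop (k+1)) ∈ Subgroup.closure S₂ :=
            wordProd_mem_closure cs hbnewsw
          have hbnewlen : ℓ (π (β.take k ++ β.drop (k+1))) + 1 ≤ ℓ (π β) := by
            have h5 : ℓ (π (β.take k ++ β.drop (k+1))) ≤ (β.take k ++ β.drop (k+1)).length :=
              cs.length_wordProd_le _
            rw [List.length_append, List.length_take, List.length_drop,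
              min_eq_left (by omega)] at h5
            omega
          have hkey : a * d * π β = π (α.eraseIdx j) * d * π (β.take k ++ β.drop (k+1)) := by
            rw [hbsplit, heq, cs.wordProd_append]
            group
          obtain ⟨a'', ha'', b'', hb'', heq2, hlen2⟩ :=
            ih (π (α.eraseIdx j)) ha' (π (β.take k ++ β.drop (k+1))) hbnew (by omega)
          exact ⟨a'', ha'', b'', hb'', by rw [hkey, heq2], by rw [hkey, hlen2]⟩
        · push_neg at hc1
          rw [List.eraseIdx_append_of_length_le hc1] at heq
          by_cases hc2 : j - α.length < μ.length
          · exfalso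
            rw [List.eraseIdx_append_of_lt_length hc2, cs.wordProd_append,
              cs.wordProd_append, ← hαeq] at heq
            have h5 : d * (π (β.take k) * σ (β[k]) * (π (β.take k))⁻¹)
                = π (μ.eraseIdx (j - α.length)) := by
              have h6 : a * (d * (π (β.take k) * σ (β[k]) * (π (β.take k))⁻¹))
                  = a * (π (μ.eraseIdx (j - α.length)) * π (β.take k) * (π (β.take k))⁻¹) := by
                rw [show a * (d * (π (β.take k) * σ (β[k]) * (π (β.take k))⁻¹))
                  = ((a * d * π (β.take k)) * σ (β[k])) * (π (β.take k))⁻¹ by group, heq]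
                group
              have h7 := mul_left_cancel h6
              rw [h7]
              group
            have hmem : π (β.take k) * σ (β[k]) * (π (β.take k))⁻¹ ∈ Subgroup.closure S₂ :=
              mul_mem (mul_mem (wordProd_mem_closure cs hβk_take_sw)
                (Subgroup.subset_closure hσmem))
                (inv_mem (wordProd_mem_closure cs hβk_take_sw))
            have h8 := hR _ hmem
            rw [h5] at h8
            have h9 : ℓ (π (μ.eraseIdx (j - α.length))) ≤ (μ.eraseIdx (j - α.length)).length :=
              cs.length_wordProd_le _
            have h10 : (μ.eraseIdx (j - α.length)).length + 1 = μ.length :=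
              List.length_eraseIdx_add_one hc2
            omega
          · push_neg at hc2
            rw [List.eraseIdx_append_of_length_le hc2, cs.wordProd_append,
              cs.wordProd_append, ← hαeq, ← hμeq] at heq
            have hj'' : j - α.length - μ.length < (β.take k).length := by
              rw [List.length_take, min_eq_left (by omega)]
              rw [List.length_take, min_eq_left (by omega)] at hj
              omega
            have hbnewsw : IsSWord cs S₂ ((β.take k).eraseIdx (j - α.length - μ.length)
                ++ β.drop (k+1)) := fun l hl =>
              (List.mem_append.mp hl).elim
                (fun h => hβk_take_sw l ((List.eraseIdx_sublist _ _).mem h))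
                (hβdrop_sw l)
            have hbnew : π ((β.take k).eraseIdx (j - α.length - μ.length) ++ β.drop (k+1))
                ∈ Subgroup.closure S₂ := wordProd_mem_closure cs hbnewsw
            have hbnewlen : ℓ (π ((β.take k).eraseIdx (j - α.length - μ.length)
                ++ β.drop (k+1))) + 2 ≤ ℓ (π β) := by
              have h5 : ℓ (π ((β.take k).eraseIdx (j - α.length - μ.length) ++ β.drop (k+1)))
                  ≤ ((β.take k).eraseIdx (j - α.length - μ.length) ++ β.drop (k+1)).length :=
                cs.length_wordProd_le _
              rw [List.length_append, List.length_drop] at h5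
              have h6 := List.length_eraseIdx_add_one hj''
              rw [List.length_take, min_eq_left (by omega)] at h6
              omega
            have hkey : a * d * π β
                = a * d * π ((β.take k).eraseIdx (j - α.length - μ.length) ++ β.drop (k+1)) := by
              rw [hbsplit, heq, cs.wordProd_append]
              group
            obtain ⟨a'', ha'', b'', hb'', heq2, hlen2⟩ :=
              ih a ha (π ((β.take k).eraseIdx (j - α.length - μ.length) ++ β.drop (k+1)))
                hbnew (by omega)
            exact ⟨a'', ha'', b'', hb'', by rw [hkey, heq2], by rw [hkey, hlen2]⟩
  intro a ha b hb
  exact main (ℓ a + ℓ b) a ha b hb le_rfl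

lemma dmin_unique {S₁ S₂ : Set W} (h₁ : S₁ ⊆ Set.range cs.simple)
    (h₂ : S₂ ⊆ Set.range cs.simple) {d x : W}
    (hdL : ∀ a ∈ Subgroup.closure S₁, ℓ (a * d) = ℓ a + ℓ d)
    (hdR : ∀ b ∈ Subgroup.closure S₂, ℓ (d * b) = ℓ d + ℓ b)
    (hx : x ∈ DC S₁ S₂ d)
    (hxL : ∀ a ∈ Subgroup.closure S₁, ℓ (a * x) = ℓ a + ℓ x)
    (hxR : ∀ b ∈ Subgroup.closure S₂, ℓ (x * b) = ℓ x + ℓ b) :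
    x = d := by
  obtain ⟨a, ha, b, hb, rfl⟩ := hx
  obtain ⟨a', ha', b', hb', heq, hlen⟩ := double_decomp cs h₁ h₂ hdL hdR a ha b hb
  rw [heq] at hlen hxL hxR ⊢
  have h1 := hxL a'⁻¹ (inv_mem ha')
  rw [show a'⁻¹ * (a' * d * b') = d * b' by group, hdR b' hb', cs.length_inv] at h1
  have ha'1 : a' = 1 := cs.length_eq_zero_iff.mp (by omega)
  subst ha'1
  have h2 := hxR b'⁻¹ (inv_mem hb')
  rw [show (1 * d * b') * b'⁻¹ = d by group, cs.length_inv] at h2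
  have hb'1 : b' = 1 := cs.length_eq_zero_iff.mp (by omega)
  subst hb'1
  group

lemma exists_min_DC (S₁ S₂ : Set W) (u : W) :
    ∃ x ∈ DC S₁ S₂ u, ∀ y ∈ DC S₁ S₂ u, ℓ x ≤ ℓ y := by
  classical
  have hex : ∃ n, ∃ x ∈ DC S₁ S₂ u, ℓ x = n :=
    ⟨ℓ u, u, self_mem_DC S₁ S₂ u, rfl⟩
  obtain ⟨x, hx, hlx⟩ := Nat.find_spec hex
  refine ⟨x, hx, fun y hy => ?_⟩
  rw [hlx]
  exact Nat.find_min' hex ⟨y, hy, rfl⟩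

lemma min_DC_props {S₁ S₂ : Set W} (h₁ : S₁ ⊆ Set.range cs.simple)
    (h₂ : S₂ ⊆ Set.range cs.simple) {u d : W} (hd : d ∈ DC S₁ S₂ u)
    (hmin : ∀ y ∈ DC S₁ S₂ u, ℓ d ≤ ℓ y) :
    (∀ a ∈ Subgroup.closure S₁, ℓ (a * d) = ℓ a + ℓ d) ∧
    (∀ b ∈ Subgroup.closure S₂, ℓ (d * b) = ℓ d + ℓ b) := by
  constructor
  · apply lmin_of_noLDesc cs h₁
    intro i hi
    have hmem : σ i * d ∈ DC S₁ S₂ u := by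
      obtain ⟨a, ha, b, hb, rfl⟩ := hd
      exact ⟨σ i * a, mul_mem (Subgroup.subset_closure hi) ha, b, hb, by group⟩
    have h1 := hmin _ hmem
    rcases cs.length_simple_mul d i with h2 | h2
    · exact h2
    · omega
  · apply rmin_of_noRDesc cs h₂
    intro i hi
    have hmem : d * σ i ∈ DC S₁ S₂ u := by
      obtain ⟨a, ha, b, hb, rfl⟩ := hd
      exact ⟨a, ha, b * σ i, mul_mem hb (Subgroup.subset_closure hi), by group⟩
    have h1 := hmin _ hmem
    rcases cs.length_mul_simple d i with h2 | h2
    · exact h2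
    · omega

lemma deodhar {S₂ : Set W} (h₂ : S₂ ⊆ Set.range cs.simple) {d : W}
    (hR : ∀ b ∈ Subgroup.closure S₂, ℓ (d * b) = ℓ d + ℓ b) (i₀ : B)
    (hasc : ℓ (σ i₀ * d) = ℓ d + 1) :
    (∃ i : B, σ i ∈ S₂ ∧ σ i₀ * d = d * σ i) ∨
    (∀ b ∈ Subgroup.closure S₂, ℓ ((σ i₀ * d) * b) = ℓ (σ i₀ * d) + ℓ b) := by
  by_cases hnd : ∀ i : B, σ i ∈ S₂ → ℓ ((σ i₀ * d) * σ i) = ℓ (σ i₀ * d) + 1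
  · exact Or.inr (rmin_of_noRDesc cs h₂ hnd)
  · left
    push_neg at hnd
    obtain ⟨i, hi, hne⟩ := hnd
    have hdesc : ℓ ((σ i₀ * d) * σ i) + 1 = ℓ (σ i₀ * d) := by
      rcases cs.length_mul_simple (σ i₀ * d) i with h2 | h2
      · exact absurd h2 hne
      · exact h2
    obtain ⟨μ, hμlen, hμeq⟩ := cs.exists_reduced_word d
    have hμlen : μ.length = ℓ d := by rw [hμeq]; exact (show ℓ (π μ) = μ.length from hμlen).symm
    have hπx : σ i₀ * d = π (i₀ :: μ) := by rw [cs.wordProd_cons, ← hμeq]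
    have hrefl : cs.IsReflection ((σ i₀ * d) * σ i * (σ i₀ * d)⁻¹) := ⟨σ i₀ * d, i, rfl⟩
    have hlt' : ℓ (((σ i₀ * d) * σ i * (σ i₀ * d)⁻¹) * (σ i₀ * d)) < ℓ (σ i₀ * d) := by
      rw [show ((σ i₀ * d) * σ i * (σ i₀ * d)⁻¹) * (σ i₀ * d) = (σ i₀ * d) * σ i by group]
      omega
    obtain ⟨j, hj, hdel⟩ := strongExchange cs hrefl hlt' hπx
    have heq : (σ i₀ * d) * σ i = π ((i₀ :: μ).eraseIdx j) := by rw [← hdel]; group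
    match j with
    | 0 =>
        refine ⟨i, hi, ?_⟩
        rw [List.eraseIdx_cons_zero, ← hμeq] at heq
        rw [show σ i₀ * d = ((σ i₀ * d) * σ i) * σ i by
          rw [mul_assoc, cs.simple_mul_simple_self, mul_one], heq]
    | j' + 1 =>
        exfalso
        rw [List.eraseIdx_cons_succ, cs.wordProd_cons] at heq
        have h5 : d * σ i = π (μ.eraseIdx j') := by
          have h6 : σ i₀ * (d * σ i) = σ i₀ * π (μ.eraseIdx j') := by
            rw [← mul_assoc, heq]
          exact mul_left_cancel h6
        have h7 := hR (σ i) (Subgroup.subset_closure hi)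
        rw [h5, cs.length_simple] at h7
        have h8 : ℓ (π (μ.eraseIdx j')) ≤ (μ.eraseIdx j').length := cs.length_wordProd_le _
        have h10 : (μ.eraseIdx j').length + 1 = μ.length := by
          rw [List.length_cons] at hj
          exact List.length_eraseIdx_add_one (by omega)
        omega

/-! ### Phase 4: the Bedard sequences -/

lemma stabilize {α : Type*} {A : ℕ → Set α} (hfin : (A 0).Finite)
    (hdec : ∀ n, A (n + 1) ⊆ A n) : ∃ N, ∀ n, N ≤ n → A n = A N := by
  have hmono : ∀ m n, m ≤ n → A n ⊆ A m := by
    intro m n hmn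
    induction hmn with
    | refl => exact subset_rfl
    | step h ih => exact (hdec _).trans ih
  have hfins : ∀ n, (A n).Finite := fun n => hfin.subset (hmono 0 n (Nat.zero_le n))
  have hne : (Set.range fun n => (A n).ncard).Nonempty := ⟨(A 0).ncard, 0, rfl⟩
  obtain ⟨N, hN⟩ := Nat.sInf_mem hne
  refine ⟨N, fun n hn => ?_⟩
  have h1 : A n ⊆ A N := hmono N n hn
  have h2 : (A N).ncard ≤ (A n).ncard := hN.trans_le (Nat.sInf_le ⟨n, rfl⟩)
  exact Set.eq_of_subset_of_ncard_le h1 h2 (hfins N)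

noncomputable def minElt (S₁ S₂ : Set W) (u : W) : W :=
  Classical.choose (exists_min_DC cs S₁ S₂ u)

lemma minElt_mem (S₁ S₂ : Set W) (u : W) : minElt cs S₁ S₂ u ∈ DC S₁ S₂ u :=
  (Classical.choose_spec (exists_min_DC cs S₁ S₂ u)).1

lemma minElt_min (S₁ S₂ : Set W) (u : W) :
    ∀ y ∈ DC S₁ S₂ u, ℓ (minElt cs S₁ S₂ u) ≤ ℓ y :=
  (Classical.choose_spec (exists_min_DC cs S₁ S₂ u)).2

variable (δ : W ≃* W) (J : Set W)

noncomputable def Jseq (u : W) : ℕ → Set W :=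
  fun n => Nat.rec J (fun _ K => K ∩ ⇑(MulEquiv.symm δ) ''
    {x : W | ∃ s ∈ K, x = (minElt cs (⇑δ '' J) K u) * s * (minElt cs (⇑δ '' J) K u)⁻¹}) n

noncomputable def wseq (u : W) (n : ℕ) : W := minElt cs (⇑δ '' J) (Jseq cs δ J u n) u

lemma Jseq_zero (u : W) : Jseq cs δ J u 0 = J := rfl

lemma Jseq_succ (u : W) (n : ℕ) : Jseq cs δ J u (n + 1)
    = Jseq cs δ J u n ∩ ⇑(MulEquiv.symm δ) ''
      {x : W | ∃ s ∈ Jseq cs δ J u n, x = wseq cs δ J u n * s * (wseq cs δ J u n)⁻¹} := rfl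

variable {δ J}

section props

lemma hS₁sub (hδ : ⇑δ '' Set.range cs.simple = Set.range cs.simple)
    (hJ : J ⊆ Set.range cs.simple) : ⇑δ '' J ⊆ Set.range cs.simple := by
  intro x hx
  rw [← hδ]
  exact Set.image_mono hJ hx

lemma Jseq_subset (u : W) : ∀ n, Jseq cs δ J u n ⊆ J := by
  intro n
  induction n with
  | zero => exact subset_rfl
  | succ n ih => exact Set.inter_subset_left.trans ih

lemma Jseq_dec (u : W) (n : ℕ) : Jseq cs δ J u (n + 1) ⊆ Jseq cs δ J u n :=
  Set.inter_subset_left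

lemma Jseq_sub_simple (hJ : J ⊆ Set.range cs.simple) (u : W) (n : ℕ) : Jseq cs δ J u n ⊆ Set.range cs.simple :=
  (Jseq_subset cs u n).trans hJ

lemma wseq_mem (u : W) (n : ℕ) : wseq cs δ J u n ∈ DC (⇑δ '' J) (Jseq cs δ J u n) u :=
  minElt_mem cs _ _ u

lemma wseq_min (u : W) (n : ℕ) :
    ∀ y ∈ DC (⇑δ '' J) (Jseq cs δ J u n) u, ℓ (wseq cs δ J u n) ≤ ℓ y :=
  minElt_min cs _ _ u

lemma wseq_L (hδ : ⇑δ '' Set.range cs.simple = Set.range cs.simple) (hJ : J ⊆ Set.range cs.simple) (u : W) (n : ℕ) :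
    ∀ a ∈ Subgroup.closure (⇑δ '' J), ℓ (a * wseq cs δ J u n) = ℓ a + ℓ (wseq cs δ J u n) :=
  (min_DC_props cs (hS₁sub cs hδ hJ) (Jseq_sub_simple cs hJ u n)
    (wseq_mem cs u n) (wseq_min cs u n)).1

lemma wseq_R (hδ : ⇑δ '' Set.range cs.simple = Set.range cs.simple) (hJ : J ⊆ Set.range cs.simple) (u : W) (n : ℕ) :
    ∀ b ∈ Subgroup.closure (Jseq cs δ J u n),
      ℓ (wseq cs δ J u n * b) = ℓ (wseq cs δ J u n) + ℓ b :=
  (min_DC_props cs (hS₁sub cs hδ hJ) (Jseq_sub_simple cs hJ u n)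
    (wseq_mem cs u n) (wseq_min cs u n)).2

/-- the step relation: `w_{n+1} ∈ w_n W_{J_n}` -/
lemma wseq_step (hδ : ⇑δ '' Set.range cs.simple = Set.range cs.simple) (hJ : J ⊆ Set.range cs.simple) (u : W) (n : ℕ) :
    ∃ b ∈ Subgroup.closure (Jseq cs δ J u n), wseq cs δ J u (n + 1) = wseq cs δ J u n * b := by
  have hsub : DC (⇑δ '' J) (Jseq cs δ J u (n+1)) u ⊆ DC (⇑δ '' J) (Jseq cs δ J u n) u := by
    rintro x ⟨a, ha, b, hb, rfl⟩
    exact ⟨a, ha, b, Subgroup.closure_mono (Jseq_dec cs u n) hb, rfl⟩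
  have hmem : wseq cs δ J u (n+1) ∈ DC (⇑δ '' J) (Jseq cs δ J u n) (wseq cs δ J u n) := by
    rw [DC_eq_of_mem (wseq_mem cs u n)]
    exact hsub (wseq_mem cs u (n+1))
  obtain ⟨a, ha, b, hb, heq⟩ := hmem
  obtain ⟨a', ha', b', hb', heq2, hlen⟩ :=
    double_decomp cs (hS₁sub cs hδ hJ) (Jseq_sub_simple cs hJ u n)
      (wseq_L cs hδ hJ u n) (wseq_R cs hδ hJ u n) a ha b hb
  rw [heq2] at heq
  have h1 := wseq_L cs hδ hJ u (n+1) a'⁻¹ (inv_mem ha')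
  rw [heq, show a'⁻¹ * (a' * wseq cs δ J u n * b') = wseq cs δ J u n * b' by group,
    cs.length_inv, wseq_R cs hδ hJ u n b' hb'] at h1
  rw [heq2] at hlen
  have ha'1 : a' = 1 := cs.length_eq_zero_iff.mp (by omega)
  subst ha'1
  exact ⟨b', hb', by rw [heq]; group⟩

/-- stable value is `u` -/
lemma wseq_stable [Finite B] (hδ : ⇑δ '' Set.range cs.simple = Set.range cs.simple)
    (hJ : J ⊆ Set.range cs.simple) (u : W)
    (hu : ∀ a ∈ Subgroup.closure (⇑δ '' J), ℓ (a * u) = ℓ a + ℓ u) :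
    ∃ N, ∀ n, N ≤ n → wseq cs δ J u n = u := by
  have hfin : (Jseq cs δ J u 0).Finite :=
    ((Set.finite_range cs.simple).subset hJ).subset (Jseq_subset cs u 0)
  obtain ⟨N, hN⟩ := stabilize hfin (Jseq_dec cs u)
  have hwconst : ∀ n, N ≤ n → wseq cs δ J u n = wseq cs δ J u N := by
    intro n hn
    unfold wseq
    rw [hN n hn]
  have hstab : Jseq cs δ J u (N + 1) = Jseq cs δ J u N := hN (N+1) (by omega)
  have hKfin : (Jseq cs δ J u N).Finite :=
    ((Set.finite_range cs.simple).subset hJ).subset (Jseq_subset cs u N)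
  have hKconj : ⇑δ '' (Jseq cs δ J u N)
      = (fun s => wseq cs δ J u N * s * (wseq cs δ J u N)⁻¹) '' (Jseq cs δ J u N) := by
    have hsub1 : Jseq cs δ J u N ⊆ ⇑(MulEquiv.symm δ) ''
        {x : W | ∃ s ∈ Jseq cs δ J u N, x = wseq cs δ J u N * s * (wseq cs δ J u N)⁻¹} := by
      conv_lhs => rw [← hstab, Jseq_succ]
      exact Set.inter_subset_right
    have hsub2 : ⇑δ '' (Jseq cs δ J u N)
        ⊆ (fun s => wseq cs δ J u N * s * (wseq cs δ J u N)⁻¹) '' (Jseq cs δ J u N) := by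
      rintro x ⟨s', hs', rfl⟩
      obtain ⟨y, hy, hyeq⟩ := hsub1 hs'
      obtain ⟨s, hs, rfl⟩ := hy
      rw [← hyeq]
      simp only [MulEquiv.apply_symm_apply]
      exact ⟨s, hs, rfl⟩
    refine Set.eq_of_subset_of_ncard_le hsub2 ?_ (hKfin.image _)
    rw [Set.ncard_image_of_injective _ (MulEquiv.injective δ),
      Set.ncard_image_of_injective _ ?_]
    intro x y hxy
    simpa using mul_left_cancel (mul_right_cancel hxy)
  have humem : u ∈ DC (⇑δ '' J) (Jseq cs δ J u N) (wseq cs δ J u N) := by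
    rw [DC_eq_of_mem (wseq_mem cs u N)]
    exact self_mem_DC _ _ u
  obtain ⟨a, ha, b, hb, heq⟩ := humem
  obtain ⟨a', ha', b', hb', heq2, hlen⟩ :=
    double_decomp cs (hS₁sub cs hδ hJ) (Jseq_sub_simple cs hJ u N)
      (wseq_L cs hδ hJ u N) (wseq_R cs hδ hJ u N) a ha b hb
  rw [heq2] at heq
  have h1 := hu a'⁻¹ (inv_mem ha')
  rw [heq, show a'⁻¹ * (a' * wseq cs δ J u N * b') = wseq cs δ J u N * b' by group,
    cs.length_inv, wseq_R cs hδ hJ u N b' hb'] at h1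
  rw [heq2] at hlen
  have ha'1 : a' = 1 := cs.length_eq_zero_iff.mp (by omega)
  subst ha'1
  rw [one_mul] at heq hlen
  have hb'1 : b' = 1 := by
    by_contra hb'ne
    obtain ⟨ρ, hρsw, hρred, hρeq⟩ := exists_reduced_sword cs (Jseq_sub_simple cs hJ u N) hb'
    have hρne : ρ ≠ [] := by
      intro h0
      apply hb'ne
      rw [h0] at hρeq
      simpa using hρeq
    obtain ⟨i, ρ', rfl⟩ := List.exists_cons_of_ne_nil hρne
    have hb'c : b' = σ i * π ρ' := by rw [hρeq, cs.wordProd_cons]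
    have hσiK : σ i ∈ Jseq cs δ J u N := hρsw i (List.mem_cons_self)
    have hρ'sw : IsSWord cs (Jseq cs δ J u N) ρ' := fun l hl => hρsw l (List.mem_cons_of_mem i hl)
    have hρ'red : cs.IsReduced ρ' := by
      have h2 := CoxeterSystem.IsReduced.drop hρred 1
      simpa using h2
    have hρ'len : ℓ (π ρ') = ρ'.length := hρ'red
    have hb'len : ℓ b' = ρ'.length + 1 := by
      have h3 : ℓ (π (i :: ρ')) = (i :: ρ').length := hρred
      rw [← hρeq] at h3
      simpa using h3
    have hconjmem : wseq cs δ J u N * σ i * (wseq cs δ J u N)⁻¹ ∈ ⇑δ '' (Jseq cs δ J u N) := by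
      rw [hKconj]
      exact ⟨σ i, hσiK, rfl⟩
    obtain ⟨s₀, hs₀K, hs₀eq⟩ := hconjmem
    have hδs₀simple : δ s₀ ∈ Set.range cs.simple := by
      rw [← hδ]
      exact Set.image_mono (Jseq_sub_simple cs hJ u N) ⟨s₀, hs₀K, rfl⟩
    obtain ⟨i₁, hi₁⟩ := hδs₀simple
    have hδs₀len : ℓ (δ s₀) = 1 := by rw [← hi₁, cs.length_simple]
    have hδs₀J : (δ s₀ : W) ∈ ⇑δ '' J := ⟨s₀, Jseq_subset cs u N hs₀K, rfl⟩
    have h4 := hu (δ s₀) (Subgroup.subset_closure hδs₀J)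
    rw [hδs₀len] at h4
    have h5 : δ s₀ * u = wseq cs δ J u N * π ρ' := by
      conv_lhs => rw [heq, hb'c]
      rw [hs₀eq]
      calc wseq cs δ J u N * σ i * (wseq cs δ J u N)⁻¹ * (wseq cs δ J u N * (σ i * π ρ'))
          = wseq cs δ J u N * (σ i * σ i) * π ρ' := by group
        _ = wseq cs δ J u N * π ρ' := by rw [cs.simple_mul_simple_self]; group
    have h6 := wseq_R cs hδ hJ u N (π ρ') (wordProd_mem_closure cs hρ'sw)
    rw [h5, h6, hρ'len] at h4
    have hlu : ℓ u = ℓ (wseq cs δ J u N) + ℓ b' := by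
      conv_lhs => rw [heq]
      exact wseq_R cs hδ hJ u N b' hb'
    rw [hlu, hb'len] at h4
    omega
  subst hb'1
  rw [mul_one] at heq
  refine ⟨N, fun n hn => ?_⟩
  rw [hwconst n hn]
  exact heq.symm

end props

/-! ### Phase 5: properties of elements of `T(J,δ)` -/

section Tprops

variable {p : (ℕ → Set W) × (ℕ → W)}

lemma T_dec
    (hrec : ∀ n, p.1 (n+1) = p.1 n ∩ ⇑δ.symm ''
      {x : W | ∃ s ∈ p.1 n, x = p.2 n * s * (p.2 n)⁻¹})
    (n : ℕ) : p.1 (n+1) ⊆ p.1 n := by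
  rw [hrec n]
  exact Set.inter_subset_left

lemma T_mono
    (hrec : ∀ n, p.1 (n+1) = p.1 n ∩ ⇑δ.symm ''
      {x : W | ∃ s ∈ p.1 n, x = p.2 n * s * (p.2 n)⁻¹})
    {m n : ℕ} (hmn : m ≤ n) : p.1 n ⊆ p.1 m := by
  induction hmn with
  | refl => exact subset_rfl
  | step h ih => exact (T_dec hrec _).trans ih

lemma T_chain
    (hrec : ∀ n, p.1 (n+1) = p.1 n ∩ ⇑δ.symm ''
      {x : W | ∃ s ∈ p.1 n, x = p.2 n * s * (p.2 n)⁻¹})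
    (hstep : ∀ n, ∃ b ∈ Subgroup.closure (p.1 n), p.2 (n+1) = p.2 n * b)
    {m n : ℕ} (hmn : m ≤ n) :
    ∃ c ∈ Subgroup.closure (p.1 m), p.2 n = p.2 m * c := by
  induction hmn with
  | refl => exact ⟨1, one_mem _, by simp⟩
  | @step n h ih =>
      obtain ⟨c, hc, hceq⟩ := ih
      obtain ⟨b, hb, hbeq⟩ := hstep n
      exact ⟨c * b, mul_mem hc (Subgroup.closure_mono (T_mono hrec h) hb),
        by rw [hbeq, hceq, mul_assoc]⟩

lemma T_eventually [Finite B] (hJ : J ⊆ Set.range cs.simple)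
    (h0 : p.1 0 = J)
    (hrec : ∀ n, p.1 (n+1) = p.1 n ∩ ⇑δ.symm ''
      {x : W | ∃ s ∈ p.1 n, x = p.2 n * s * (p.2 n)⁻¹})
    (hminR : ∀ n, ∀ b ∈ Subgroup.closure (p.1 n), ℓ (p.2 n * b) = ℓ (p.2 n) + ℓ b)
    (hstep : ∀ n, ∃ b ∈ Subgroup.closure (p.1 n), p.2 (n+1) = p.2 n * b) :
    ∃ N, ∀ n, N ≤ n → p.2 n = p.2 N := by
  have hfin : (p.1 0).Finite := by
    rw [h0]
    exact (Set.finite_range cs.simple).subset hJ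
  obtain ⟨N, hN⟩ := stabilize hfin (T_dec hrec)
  refine ⟨N, fun n hn => ?_⟩
  induction hn with
  | refl => rfl
  | @step n h ih =>
      obtain ⟨b, hb, hbeq⟩ := hstep n
      have h1 := hminR n b hb
      have hb' : b⁻¹ ∈ Subgroup.closure (p.1 (n+1)) := by
        rw [hN (n+1) (Nat.le_succ_of_le h), ← hN n h]
        exact inv_mem hb
      have h2 := hminR (n+1) b⁻¹ hb'
      rw [hbeq, show p.2 n * b * b⁻¹ = p.2 n by group, cs.length_inv] at h2
      have hb0 : ℓ b = 0 := by omega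
      have hb1 : b = 1 := cs.length_eq_zero_iff.mp hb0
      show p.2 (n+1) = p.2 N
      rw [hbeq, hb1, mul_one]
      exact ih

lemma T_LMin (hδ : ⇑δ '' Set.range cs.simple = Set.range cs.simple)
    (hJ : J ⊆ Set.range cs.simple)
    (h0 : p.1 0 = J)
    (hrec : ∀ n, p.1 (n+1) = p.1 n ∩ ⇑δ.symm ''
      {x : W | ∃ s ∈ p.1 n, x = p.2 n * s * (p.2 n)⁻¹})
    (hminL : ∀ n, ∀ a ∈ Subgroup.closure (⇑δ '' p.1 n), ℓ (a * p.2 n) = ℓ a + ℓ (p.2 n))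
    (hminR : ∀ n, ∀ b ∈ Subgroup.closure (p.1 n), ℓ (p.2 n * b) = ℓ (p.2 n) + ℓ b)
    (hstep : ∀ n, ∃ b ∈ Subgroup.closure (p.1 n), p.2 (n+1) = p.2 n * b) :
    ∀ n m, m ≤ n → ∀ a ∈ Subgroup.closure (⇑δ '' p.1 m),
      ℓ (a * p.2 n) = ℓ a + ℓ (p.2 n) := by
  have hsubm : ∀ m, p.1 m ⊆ Set.range cs.simple := by
    intro m
    refine (T_mono hrec (Nat.zero_le m)).trans ?_
    rw [h0]
    exact hJ
  have hsubδm : ∀ m, ⇑δ '' p.1 m ⊆ Set.range cs.simple := by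
    intro m x hx
    rw [← hδ]
    exact Set.image_mono (hsubm m) hx
  intro n
  have Q : ∀ d m, m + d = n → ∀ a ∈ Subgroup.closure (⇑δ '' p.1 m),
      ℓ (a * p.2 n) = ℓ a + ℓ (p.2 n) := by
    intro d
    induction d with
    | zero =>
        intro m hm
        have hmn : m = n := by omega
        subst hmn
        exact hminL m
    | succ d ih =>
        intro m hm
        apply lmin_of_noLDesc cs (hsubδm m)
        intro i hi
        obtain ⟨s₀, hs₀, hs₀eq⟩ := hi
        have hasc : ℓ (σ i * p.2 m) = ℓ (p.2 m) + 1 := by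
          have h1 := hminL m (σ i) (Subgroup.subset_closure ⟨s₀, hs₀, hs₀eq⟩)
          rw [cs.length_simple] at h1
          omega
        rcases deodhar cs (hsubm m) (hminR m) i hasc with ⟨i₃, hi₃, heq3⟩ | hrmin
        · have hs₀next : s₀ ∈ p.1 (m+1) := by
            rw [hrec m]
            refine ⟨hs₀, σ i, ⟨σ i₃, hi₃, ?_⟩, ?_⟩
            · rw [← heq3]
              group
            · rw [← hs₀eq]
              simp
          have h2 := ih (m+1) (by omega) (σ i)
            (Subgroup.subset_closure ⟨s₀, hs₀next, hs₀eq⟩)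
          rw [cs.length_simple] at h2
          omega
        · obtain ⟨c, hc, hceq⟩ := T_chain hrec hstep (show m ≤ n by omega)
          rw [hceq, ← mul_assoc, hrmin c hc, hasc, hminR m c hc]
          omega
  intro m hmn
  exact Q (n - m) m (by omega)

lemma T_ident [Finite B] (hδ : ⇑δ '' Set.range cs.simple = Set.range cs.simple)
    (hJ : J ⊆ Set.range cs.simple)
    (h0 : p.1 0 = J)
    (hrec : ∀ n, p.1 (n+1) = p.1 n ∩ ⇑δ.symm ''
      {x : W | ∃ s ∈ p.1 n, x = p.2 n * s * (p.2 n)⁻¹})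
    (hminL : ∀ n, ∀ a ∈ Subgroup.closure (⇑δ '' p.1 n), ℓ (a * p.2 n) = ℓ a + ℓ (p.2 n))
    (hminR : ∀ n, ∀ b ∈ Subgroup.closure (p.1 n), ℓ (p.2 n * b) = ℓ (p.2 n) + ℓ b)
    (hstep : ∀ n, ∃ b ∈ Subgroup.closure (p.1 n), p.2 (n+1) = p.2 n * b)
    {N : ℕ} (hNw : ∀ n, N ≤ n → p.2 n = p.2 N) :
    (∀ a ∈ Subgroup.closure (⇑δ '' J), ℓ (a * p.2 N) = ℓ a + ℓ (p.2 N)) ∧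
    (∀ n, p.1 n = Jseq cs δ J (p.2 N) n ∧ p.2 n = wseq cs δ J (p.2 N) n) := by
  have hu : ∀ a ∈ Subgroup.closure (⇑δ '' J), ℓ (a * p.2 N) = ℓ a + ℓ (p.2 N) := by
    have h1 := T_LMin cs hδ hJ h0 hrec hminL hminR hstep N 0 (Nat.zero_le N)
    rwa [h0] at h1
  refine ⟨hu, ?_⟩
  -- membership of p.2 n in the double coset of u = p.2 N
  have humem : ∀ n, ∃ c ∈ Subgroup.closure (p.1 n), p.2 N = p.2 n * c := by
    intro n
    rcases le_or_gt n N with h | h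
    · exact T_chain hrec hstep h
    · exact ⟨1, one_mem _, by rw [hNw n h.le, mul_one]⟩
  have wid : ∀ n, p.1 n = Jseq cs δ J (p.2 N) n → p.2 n = wseq cs δ J (p.2 N) n := by
    intro n hJn
    obtain ⟨c, hc, hceq⟩ := humem n
    refine dmin_unique cs (hS₁sub cs hδ hJ) (Jseq_sub_simple cs hJ (p.2 N) n)
      (wseq_L cs hδ hJ (p.2 N) n) (wseq_R cs hδ hJ (p.2 N) n) ?_ ?_ ?_
    · rw [DC_eq_of_mem (wseq_mem cs (p.2 N) n)]
      refine ⟨1, one_mem _, c⁻¹, inv_mem ?_, by rw [hceq]; group⟩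
      rw [← hJn]
      exact hc
    · have h1 := T_LMin cs hδ hJ h0 hrec hminL hminR hstep n 0 (Nat.zero_le n)
      rwa [h0] at h1
    · intro b hb
      refine hminR n b ?_
      rw [hJn]
      exact hb
  have jid : ∀ n, p.1 n = Jseq cs δ J (p.2 N) n := by
    intro n
    induction n with
    | zero => rw [h0, Jseq_zero]
    | succ n ih =>
        rw [hrec n, ih, wid n ih, Jseq_succ]
  exact fun n => ⟨jid n, wid n (jid n)⟩

end Tprops

end
end Bedard

/-- The set `T(J,δ)` of admissible pairs of sequences `(J'_n, w'_n)_{n ≥ 0}`. -/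
def bedardT {B W : Type*} [Group W] {M : CoxeterMatrix B}
    (cs : CoxeterSystem M W) (δ : W ≃* W) (J : Set W) :
    Set ((ℕ → Set W) × (ℕ → W)) :=
  {p | p.1 0 = J ∧
    (∀ n : ℕ,
      p.1 (n + 1) = p.1 n ∩ ⇑δ.symm '' {x : W | ∃ s ∈ p.1 n, x = p.2 n * s * (p.2 n)⁻¹}) ∧
    (∀ n : ℕ,
      (∀ a ∈ Subgroup.closure (⇑δ '' p.1 n),
        cs.length (a * p.2 n) = cs.length a + cs.length (p.2 n)) ∧
      (∀ a ∈ Subgroup.closure (p.1 n),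
        cs.length (p.2 n * a) = cs.length (p.2 n) + cs.length a)) ∧
    (∀ n : ℕ, ∃ b ∈ Subgroup.closure (p.1 n), p.2 (n + 1) = p.2 n * b)}

theorem bedard_bijection
    {B W : Type*} [Finite B] [Group W] {M : CoxeterMatrix B}
    (cs : CoxeterSystem M W) (δ : W ≃* W)
    (hδ : ⇑δ '' Set.range cs.simple = Set.range cs.simple)
    (J : Set W) (hJ : J ⊆ Set.range cs.simple) :
    -- every element of `T(J,δ)` has eventually constant sequence `(w'_n)`
    (∀ p ∈ bedardT cs δ J, ∃ N : ℕ, ∀ n ≥ N, p.2 n = p.2 N) ∧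
    -- and the map `κ` sending `w` to its Bédard sequences is a bijection onto `T(J,δ)`
    -- whose inverse sends a pair of sequences to the stable value of `(w'_n)`
    ∃ κ : {u : W // ∀ a ∈ Subgroup.closure (⇑δ '' J),
        cs.length (a * u) = cs.length a + cs.length u} →
      {p : (ℕ → Set W) × (ℕ → W) // p ∈ bedardT cs δ J},
      Function.Bijective κ ∧
      (∀ u, ∀ n : ℕ,
        (κ u).1.2 n ∈ {x : W | ∃ a ∈ Subgroup.closure (⇑δ '' J),
          ∃ b ∈ Subgroup.closure ((κ u).1.1 n), x = a * (u : W) * b} ∧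
        ∀ x ∈ {x : W | ∃ a ∈ Subgroup.closure (⇑δ '' J),
          ∃ b ∈ Subgroup.closure ((κ u).1.1 n), x = a * (u : W) * b},
          cs.length ((κ u).1.2 n) ≤ cs.length x) ∧
      (∀ u, ∃ N : ℕ, ∀ n ≥ N, (κ u).1.2 n = (u : W)) := by
  constructor
  · rintro p ⟨h0, hrec, hmin, hstep⟩
    obtain ⟨N, hN⟩ := Bedard.T_eventually cs hJ h0 hrec (fun n => (hmin n).2) hstep
    exact ⟨N, fun n hn => hN n hn⟩
  · have hmem : ∀ u : {u : W // ∀ a ∈ Subgroup.closure (⇑δ '' J),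
        cs.length (a * u) = cs.length a + cs.length u},
      ((Bedard.Jseq cs δ J u.1, Bedard.wseq cs δ J u.1) : (ℕ → Set W) × (ℕ → W))
        ∈ bedardT cs δ J := by
      intro u
      refine ⟨rfl, fun n => Bedard.Jseq_succ cs δ J u.1 n, fun n => ⟨?_, ?_⟩, fun n => ?_⟩
      · intro a ha
        exact Bedard.wseq_L cs hδ hJ u.1 n a
          (Subgroup.closure_mono (Set.image_mono (Bedard.Jseq_subset cs u.1 n)) ha)
      · exact Bedard.wseq_R cs hδ hJ u.1 n
      · exact Bedard.wseq_step cs hδ hJ u.1 n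
    refine ⟨fun u => ⟨_, hmem u⟩, ⟨?_, ?_⟩, ?_, ?_⟩
    · -- injective
      intro u₁ u₂ h
      have h2 : ∀ n, Bedard.wseq cs δ J u₁.1 n = Bedard.wseq cs δ J u₂.1 n := by
        intro n
        have h3 := congrArg (fun q => q.1.2 n) h
        exact h3
      obtain ⟨N₁, hN₁⟩ := Bedard.wseq_stable cs hδ hJ u₁.1 u₁.2
      obtain ⟨N₂, hN₂⟩ := Bedard.wseq_stable cs hδ hJ u₂.1 u₂.2
      apply Subtype.ext
      calc (u₁ : W) = Bedard.wseq cs δ J u₁.1 (max N₁ N₂) :=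
            (hN₁ _ (le_max_left _ _)).symm
        _ = Bedard.wseq cs δ J u₂.1 (max N₁ N₂) := h2 _
        _ = (u₂ : W) := hN₂ _ (le_max_right _ _)
    · -- surjective
      rintro ⟨p, h0, hrec, hmin, hstep⟩
      obtain ⟨N, hNw⟩ := Bedard.T_eventually cs hJ h0 hrec (fun n => (hmin n).2) hstep
      obtain ⟨hu, hident⟩ := Bedard.T_ident cs hδ hJ h0 hrec (fun n => (hmin n).1)
        (fun n => (hmin n).2) hstep hNw
      refine ⟨⟨p.2 N, hu⟩, ?_⟩
      apply Subtype.ext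
      show (Bedard.Jseq cs δ J (p.2 N), Bedard.wseq cs δ J (p.2 N)) = p
      have hp1 : p.1 = Bedard.Jseq cs δ J (p.2 N) := funext fun n => (hident n).1
      have hp2 : p.2 = Bedard.wseq cs δ J (p.2 N) := funext fun n => (hident n).2
      exact Prod.ext_iff.mpr ⟨hp1.symm, hp2.symm⟩
    · -- minimality
      intro u n
      exact ⟨Bedard.wseq_mem cs u.1 n, Bedard.wseq_min cs u.1 n⟩
    · -- eventual constancy at u
      intro u
      obtain ⟨N, hN⟩ := Bedard.wseq_stable cs hδ hJ u.1 u.2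
      exact ⟨N, fun n hn => hN n hn⟩
end

section
/- Let w ∈ ^{δ(J)}W and let J^w_∞ denote the stable value of the sequence (J_n). Then w J^w_∞ w⁻¹ = δ(J^w_∞) as subsets of S; consequently the map τ_w : x ↦ w δ⁻¹(x) w⁻¹ is a group automorphism of the parabolic subgroup W_{δ(J^w_∞)} which maps the set δ(J^w_∞) of simple reflections onto itself. -/
/-!
Lusztig, "Nonsplit Hecke algebras and perverse sheaves", §1.3.  STATEMENT 3:
`w J^w_∞ w⁻¹ = δ(J^w_∞)`, and `τ_w : x ↦ w δ⁻¹(x) w⁻¹` is an automorphism of the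
parabolic subgroup `W_{δ(J^w_∞)}` mapping the set of simple reflections `δ(J^w_∞)`
onto itself.
-/

theorem bedard_stable_subset_conjugation
    {B W : Type*} [Finite B] [Group W] {M : CoxeterMatrix B}
    (cs : CoxeterSystem M W) (δ : W ≃* W)
    (hδ : ⇑δ '' Set.range cs.simple = Set.range cs.simple)
    (J : Set W) (hJ : J ⊆ Set.range cs.simple)
    (w : W)
    (hw : ∀ a ∈ Subgroup.closure (⇑δ '' J),
      cs.length (a * w) = cs.length a + cs.length w)
    (Jn : ℕ → Set W) (wn : ℕ → W)
    (hJ0 : Jn 0 = J)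
    (hJrec : ∀ n : ℕ,
      Jn (n + 1) = Jn n ∩ ⇑δ.symm '' {x : W | ∃ s ∈ Jn n, x = wn n * s * (wn n)⁻¹})
    (hwn : ∀ n : ℕ,
      wn n ∈ {x : W | ∃ a ∈ Subgroup.closure (⇑δ '' J),
        ∃ b ∈ Subgroup.closure (Jn n), x = a * w * b} ∧
      ∀ x ∈ {x : W | ∃ a ∈ Subgroup.closure (⇑δ '' J),
        ∃ b ∈ Subgroup.closure (Jn n), x = a * w * b},
        cs.length (wn n) ≤ cs.length x)
    (Jinf : Set W) (hJinf : ∃ N : ℕ, ∀ n ≥ N, Jn n = Jinf) :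
    {x : W | ∃ s ∈ Jinf, x = w * s * w⁻¹} = ⇑δ '' Jinf ∧
    ∃ τ : ↥(Subgroup.closure (⇑δ '' Jinf)) ≃* ↥(Subgroup.closure (⇑δ '' Jinf)),
      (∀ x : ↥(Subgroup.closure (⇑δ '' Jinf)),
        (τ x : W) = w * δ.symm (x : W) * w⁻¹) ∧
      (fun x : W => w * δ.symm x * w⁻¹) '' (⇑δ '' Jinf) = ⇑δ '' Jinf := by
  obtain ⟨N, hN⟩ := hJinf
  have hJNinf : Jn N = Jinf := hN N le_rfl
  have hJN1 : Jn (N + 1) = Jinf := hN (N + 1) (Nat.le_succ N)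
  -- Jinf ⊆ J
  have hmono : ∀ n, Jn n ⊆ J := by
    intro n
    induction n with
    | zero => rw [hJ0]
    | succ n ih => rw [hJrec n]; exact fun x hx => ih hx.1
  have hJinfJ : Jinf ⊆ J := hJNinf ▸ hmono N
  have hfin : Jinf.Finite := (Set.finite_range cs.simple).subset (hJinfJ.trans hJ)
  set v := wn N with hv
  -- stability gives δ '' Jinf ⊆ conjugate of Jinf by v
  have hsub : ⇑δ '' Jinf ⊆ (fun s => v * s * v⁻¹) '' Jinf := by
    rintro x ⟨s, hs, rfl⟩
    have hrec := hJrec N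
    rw [hJNinf, hJN1] at hrec
    have hs' : s ∈ Jinf ∩ ⇑δ.symm '' {x : W | ∃ t ∈ Jinf, x = v * t * v⁻¹} := hrec ▸ hs
    obtain ⟨c, ⟨t, ht, rfl⟩, hsc⟩ := hs'.2
    refine ⟨t, ht, ?_⟩
    show v * t * v⁻¹ = δ s
    rw [← hsc, MulEquiv.apply_symm_apply]
  have hconjinj : Function.Injective (fun s : W => v * s * v⁻¹) := by
    intro a b hab
    exact mul_left_cancel (mul_right_cancel (hab : v * a * v⁻¹ = v * b * v⁻¹))
  -- cardinality forces equality
  have hkey : ⇑δ '' Jinf = (fun s => v * s * v⁻¹) '' Jinf :=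
    Set.eq_of_subset_of_ncard_le hsub
      (by rw [Set.ncard_image_of_injective _ δ.injective,
        Set.ncard_image_of_injective _ hconjinj]) (hfin.image _)
  -- conjugation by v maps the parabolic W_Jinf onto W_{δ Jinf}
  have hconjmap : (Subgroup.closure Jinf).map (MulAut.conj v).toMonoidHom
      = Subgroup.closure (⇑δ '' Jinf) := by
    rw [MonoidHom.map_closure, hkey]
    congr 1
  -- w = v
  obtain ⟨⟨a, ha, b, hb, hvab⟩, hmin⟩ := hwn N
  rw [hJNinf] at hb
  rw [← hv] at hvab
  have hbconj : v * b⁻¹ * v⁻¹ ∈ Subgroup.closure (⇑δ '' Jinf) := by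
    rw [← hconjmap]
    exact ⟨b⁻¹, inv_mem hb, rfl⟩
  have haa : a⁻¹ * (v * b⁻¹ * v⁻¹) ∈ Subgroup.closure (⇑δ '' J) :=
    mul_mem (inv_mem ha)
      (Subgroup.closure_mono (Set.image_mono hJinfJ) hbconj)
  have hw2 : w = a⁻¹ * (v * b⁻¹ * v⁻¹) * v := by rw [hvab]; group
  have hvweq : (a⁻¹ * (v * b⁻¹ * v⁻¹))⁻¹ * w = v := by rw [hw2]; group
  have hlen := hw _ (inv_mem haa)
  rw [hvweq] at hlen
  have hminw : cs.length v ≤ cs.length w :=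
    hmin w ⟨1, one_mem _, 1, one_mem _, by group⟩
  have hone : (a⁻¹ * (v * b⁻¹ * v⁻¹))⁻¹ = 1 := by
    rw [← cs.length_eq_zero_iff]
    omega
  have hwv : w = v := by
    have : a⁻¹ * (v * b⁻¹ * v⁻¹) = 1 := by
      rw [← inv_inv (a⁻¹ * (v * b⁻¹ * v⁻¹)), hone, inv_one]
    rw [hw2, this, one_mul]
  -- first conjunct
  have hset : {x : W | ∃ s ∈ Jinf, x = w * s * w⁻¹} = ⇑δ '' Jinf := by
    rw [hwv, hkey]
    ext x
    simp [eq_comm]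
  refine ⟨hset, ?_⟩
  -- the automorphism
  set φ : W ≃* W := (δ.symm : W ≃* W).trans (MulAut.conj w) with hφ
  have hφapply : ∀ x : W, φ x = w * δ.symm x * w⁻¹ := fun x => rfl
  have hφimg : ⇑φ '' (⇑δ '' Jinf) = ⇑δ '' Jinf := by
    rw [← Set.image_comp]
    have : ⇑φ ∘ ⇑δ = fun s : W => w * s * w⁻¹ := by
      ext s
      simp [hφapply]
    rw [this, hwv, ← hkey]
  have hmap : (Subgroup.closure (⇑δ '' Jinf)).map (φ : W →* W)
      = Subgroup.closure (⇑δ '' Jinf) := by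
    rw [MonoidHom.map_closure]
    exact congrArg _ hφimg
  refine ⟨(φ.subgroupMap (Subgroup.closure (⇑δ '' Jinf))).trans
      (MulEquiv.subgroupCongr hmap), fun x => ?_, ?_⟩
  · exact rfl
  · have : (fun x : W => w * δ.symm x * w⁻¹) = ⇑φ := by
      ext x; rw [hφapply]
    rw [this, hφimg]
end
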